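/- arXiv:2009.12184 — 6 statements merged into one kernel-verified Lean document; each statement's English description precedes it below -/
import Mathlib

section
/- Let G' be a bipartite graph with bipartition (A, B), and suppose G' has no vertex v ∈ A with N(v) = B, no vertex v ∈ B with N(v) = A, and no isolated vertices. Let G'' be the complement of G'. Then a set U ⊆ A ∪ B is a maximal biclique of G' containing at least one vertex of A and at least one vertex of B if and only if (A ∪ B) \ U is a minimal separator of G''. -/
open SimpleGraph

universe u

/-- The set of vertices outside `C` having a neighbor in `C`. -/
def nbhd {V : Type u} (G : SimpleGraph V) (C : Set V) : Set V :=
  {v | v ∉ C ∧ ∃ u ∈ C, G.Adj u v}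

/-- `C` is a connected component of `G − S`. -/
def IsCompOf {V : Type u} (G : SimpleGraph V) (S C : Set V) : Prop :=
  C.Nonempty ∧ Disjoint C S ∧ (G.induce C).Connected ∧
    ∀ u ∈ C, ∀ v, G.Adj u v → v ∉ S → v ∈ C

/-- `C` is a full component associated to `S`: a component of `G − S` with `N(C) = S`. -/
def IsFullCompOf {V : Type u} (G : SimpleGraph V) (S C : Set V) : Prop :=
  IsCompOf G S C ∧ nbhd G C = S

/-- `S` is a minimal separator of `G`:
`G − S` has at least two (distinct) full components associated to `S`. -/
def IsMinSep {V : Type u} (G : SimpleGraph V) (S : Set V) : Prop :=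
  ∃ C₁ C₂ : Set V, C₁ ≠ C₂ ∧ IsFullCompOf G S C₁ ∧ IsFullCompOf G S C₂

/-- `U` is a biclique of a bipartite graph with bipartition `(A, B)`:
every vertex of `U ∩ A` is adjacent to every vertex of `U ∩ B`. -/
def IsBicliqueOn {V : Type u} (G : SimpleGraph V) (A B U : Set V) : Prop :=
  ∀ a ∈ U ∩ A, ∀ b ∈ U ∩ B, G.Adj a b

/- ---------- auxiliary lemmas ---------- -/

lemma walk_mem_aux {V : Type u} (G : SimpleGraph V) (S C₁ C₂ : Set V)
    (hcl : ∀ u ∈ C₁, ∀ v, G.Adj u v → v ∉ S → v ∈ C₁)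
    (hdis : Disjoint C₂ S) :
    ∀ {x y : C₂}, (G.induce C₂).Walk x y → (x : V) ∈ C₁ → (y : V) ∈ C₁ := by
  intro x y p
  induction p with
  | nil => exact id
  | @cons a b c h p ih =>
    intro hx
    have hadj : G.Adj (a : V) (b : V) := h
    have hbS : (b : V) ∉ S := fun hs => Set.disjoint_left.mp hdis b.2 hs
    exact ih (hcl _ hx _ hadj hbS)

lemma comp_subset_aux {V : Type u} (G : SimpleGraph V) (S C₁ C₂ : Set V)
    (hcl : ∀ u ∈ C₁, ∀ v, G.Adj u v → v ∉ S → v ∈ C₁)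
    (hdis : Disjoint C₂ S) (hconn : (G.induce C₂).Connected)
    {v : V} (hv2 : v ∈ C₂) (hv1 : v ∈ C₁) : C₂ ⊆ C₁ := by
  intro w hw
  obtain ⟨p⟩ := hconn.preconnected ⟨v, hv2⟩ ⟨w, hw⟩
  exact walk_mem_aux G S C₁ C₂ hcl hdis p hv1

lemma comps_disjoint_aux {V : Type u} (G : SimpleGraph V) (S C₁ C₂ : Set V)
    (h1 : IsCompOf G S C₁) (h2 : IsCompOf G S C₂) (hne : C₁ ≠ C₂) :
    Disjoint C₁ C₂ := by
  rw [Set.disjoint_left]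
  intro v hv1 hv2
  apply hne
  apply Set.Subset.antisymm
  · exact comp_subset_aux G S C₂ C₁ h2.2.2.2 h1.2.1 h1.2.2.1 hv1 hv2
  · exact comp_subset_aux G S C₁ C₂ h1.2.2.2 h2.2.1 h2.2.2.1 hv2 hv1

lemma clique_conn_aux {V : Type u} (G : SimpleGraph V) (C : Set V) (hne : C.Nonempty)
    (hadj : ∀ x ∈ C, ∀ y ∈ C, x ≠ y → G.Adj x y) : (G.induce C).Connected := by
  rw [connected_iff]
  refine ⟨fun x y => ?_, ⟨⟨hne.choose, hne.choose_spec⟩⟩⟩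
  by_cases h : x = y
  · exact h ▸ Reachable.refl x
  · have : (G.induce C).Adj x y := hadj x.1 x.2 y.1 y.2 (fun hxy => h (Subtype.ext hxy))
    exact this.reachable

lemma fullcomp_helper {V : Type u} (G' : SimpleGraph V) (A U : Set V)
    (hnA : ∀ x ∈ A, ∀ y ∈ A, ¬ G'.Adj x y)
    (hbic : ∀ a ∈ U ∩ A, ∀ b ∈ U ∩ Aᶜ, G'.Adj a b)
    (hUA : (U ∩ A).Nonempty)
    (hmaxB : ∀ s ∈ Aᶜ, s ∉ U → ∃ a ∈ U ∩ A, ¬ G'.Adj a s) :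
    IsFullCompOf G'ᶜ Uᶜ (U ∩ A) := by
  obtain ⟨a0, ha0U, ha0A⟩ := hUA
  constructor
  · refine ⟨⟨a0, ha0U, ha0A⟩, ?_, ?_, ?_⟩
    · rw [Set.disjoint_left]; intro x hx hxc; exact hxc hx.1
    · apply clique_conn_aux
      · exact ⟨a0, ha0U, ha0A⟩
      · intro x hx y hy hxy
        exact (compl_adj G' x y).mpr ⟨hxy, hnA x hx.2 y hy.2⟩
    · intro u hu v hadj hv
      rw [compl_adj] at hadj
      have hvU : v ∈ U := by simpa using hv
      refine ⟨hvU, ?_⟩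
      by_contra hvA
      exact hadj.2 (hbic u hu v ⟨hvU, hvA⟩)
  · ext s
    simp only [nbhd, Set.mem_setOf_eq, Set.mem_compl_iff]
    constructor
    · rintro ⟨hs, u, hu, hadj⟩ hsU
      have hsA : s ∈ Aᶜ := fun hsA => hs ⟨hsU, hsA⟩
      exact ((compl_adj _ _ _).mp hadj).2 (hbic u hu s ⟨hsU, hsA⟩)
    · intro hsU
      by_cases hsA : s ∈ A
      · refine ⟨fun h => hsU h.1, a0, ⟨ha0U, ha0A⟩,
          (compl_adj _ _ _).mpr ⟨?_, hnA a0 ha0A s hsA⟩⟩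
        intro h; exact hsU (h ▸ ha0U)
      · obtain ⟨a, haUA, hna⟩ := hmaxB s hsA hsU
        refine ⟨fun h => hsU h.1, a, haUA, (compl_adj _ _ _).mpr ⟨?_, hna⟩⟩
        intro h; exact hsA (h ▸ haUA.2)

lemma same_part_aux {V : Type u} (G' : SimpleGraph V) (T U C₁ C₂ : Set V)
    (hnT : ∀ x ∈ T, ∀ y ∈ T, ¬ G'.Adj x y)
    (hcl : ∀ u ∈ C₁, ∀ v, G'ᶜ.Adj u v → v ∉ Uᶜ → v ∈ C₁)
    (hdisj : Disjoint C₁ C₂) (hC2 : Disjoint C₂ Uᶜ)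
    {a c : V} (ha : a ∈ C₁) (haT : a ∈ T) (hc : c ∈ C₂) (hcT : c ∈ T) : False := by
  have hac : a ≠ c := fun h => Set.disjoint_left.mp hdisj ha (h ▸ hc)
  have hcU : c ∉ Uᶜ := fun h => Set.disjoint_left.mp hC2 hc h
  have : c ∈ C₁ := hcl a ha c ((compl_adj _ _ _).mpr ⟨hac, hnT a haT c hcT⟩) hcU
  exact Set.disjoint_left.mp hdisj this hc

lemma backward_core {V : Type u} (G' : SimpleGraph V) (A U C₁ C₂ : Set V)
    (hnA : ∀ x ∈ A, ∀ y ∈ A, ¬ G'.Adj x y)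
    (hnB : ∀ x ∈ Aᶜ, ∀ y ∈ Aᶜ, ¬ G'.Adj x y)
    (h1 : IsFullCompOf G'ᶜ Uᶜ C₁) (h2 : IsFullCompOf G'ᶜ Uᶜ C₂)
    (hdisj : Disjoint C₁ C₂) (hC1A : C₁ ⊆ A) (hC2B : C₂ ⊆ Aᶜ) :
    IsBicliqueOn G' A Aᶜ U ∧ (U ∩ A).Nonempty ∧ (U ∩ Aᶜ).Nonempty ∧
      ∀ W, IsBicliqueOn G' A Aᶜ W → U ⊆ W → W = U := by
  obtain ⟨⟨hne1, hdis1, _, hcl1⟩, hfull1⟩ := h1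
  obtain ⟨⟨hne2, hdis2, _, hcl2⟩, hfull2⟩ := h2
  have hC1U : C₁ ⊆ U := fun v hv => by
    by_contra h; exact Set.disjoint_left.mp hdis1 hv h
  have hC2U : C₂ ⊆ U := fun v hv => by
    by_contra h; exact Set.disjoint_left.mp hdis2 hv h
  have eq1 : C₁ = U ∩ A := by
    apply Set.Subset.antisymm (fun v hv => Set.mem_inter (hC1U hv) (hC1A hv))
    rintro u ⟨huU, huA⟩
    by_contra huC
    obtain ⟨c, hc⟩ := hne1
    exact huC (hcl1 c hc u
      ((compl_adj _ _ _).mpr ⟨fun h => huC (h ▸ hc), hnA c (hC1A hc) u huA⟩) (by simpa using huU))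
  have eq2 : C₂ = U ∩ Aᶜ := by
    apply Set.Subset.antisymm (fun v hv => Set.mem_inter (hC2U hv) (hC2B hv))
    rintro u ⟨huU, huA⟩
    by_contra huC
    obtain ⟨c, hc⟩ := hne2
    exact huC (hcl2 c hc u
      ((compl_adj _ _ _).mpr ⟨fun h => huC (h ▸ hc), hnB c (hC2B hc) u huA⟩) (by simpa using huU))
  refine ⟨?_, eq1 ▸ hne1, eq2 ▸ hne2, ?_⟩
  · intro a ha b hb
    by_contra hadj
    have hab : a ≠ b := fun h => hb.2 (h ▸ ha.2)
    have : b ∈ C₁ := hcl1 a (eq1 ▸ ha) b ((compl_adj _ _ _).mpr ⟨hab, hadj⟩) (by simpa using hb.1)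
    exact Set.disjoint_left.mp hdisj this (eq2 ▸ hb)
  · intro W hW hUW
    apply Set.Subset.antisymm _ hUW
    intro s hsW
    by_contra hsU
    have hs1 : s ∈ nbhd G'ᶜ C₁ := by rw [hfull1]; exact hsU
    have hs2 : s ∈ nbhd G'ᶜ C₂ := by rw [hfull2]; exact hsU
    obtain ⟨-, a, haC, hadja⟩ := hs1
    obtain ⟨-, b, hbC, hadjb⟩ := hs2
    by_cases hsA : s ∈ A
    · exact ((compl_adj _ _ _).mp hadjb).2
        ((hW s ⟨hsW, hsA⟩ b ⟨hUW (hC2U hbC), hC2B hbC⟩).symm)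
    · exact ((compl_adj _ _ _).mp hadja).2 (hW a ⟨hUW (hC1U haC), hC1A haC⟩ s ⟨hsW, hsA⟩)

/-- Let `G'` be a bipartite graph with bipartition `(A, B)`, with no vertex of `A`
adjacent to all of `B`, no vertex of `B` adjacent to all of `A`, and no isolated
vertices. Let `G''` be the complement of `G'`. Then `U` is a maximal biclique of `G'`
containing a vertex of `A` and a vertex of `B` iff `(A ∪ B) \ U` is a minimal
separator of `G''`. -/
theorem stmt3 {V : Type u} [Fintype V] (G' : SimpleGraph V) (A B : Set V)
    (hAB : B = Aᶜ)
    (hbip : ∀ u v, G'.Adj u v → (u ∈ A ∧ v ∈ B) ∨ (u ∈ B ∧ v ∈ A))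
    (hA : ¬ ∃ v ∈ A, ∀ b ∈ B, G'.Adj v b)
    (hB : ¬ ∃ v ∈ B, ∀ a ∈ A, G'.Adj v a)
    (hnoiso : ∀ v : V, ∃ w, G'.Adj v w)
    (U : Set V) :
    (IsBicliqueOn G' A B U ∧ (U ∩ A).Nonempty ∧ (U ∩ B).Nonempty ∧
        ∀ W, IsBicliqueOn G' A B W → U ⊆ W → W = U) ↔
      IsMinSep G'ᶜ Uᶜ := by
  subst hAB
  have hnA : ∀ x ∈ A, ∀ y ∈ A, ¬ G'.Adj x y := by
    intro x hx y hy hadj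
    rcases hbip x y hadj with ⟨_, h⟩ | ⟨h, _⟩
    · exact h hy
    · exact h hx
  have hnB : ∀ x ∈ Aᶜ, ∀ y ∈ Aᶜ, ¬ G'.Adj x y := by
    intro x hx y hy hadj
    rcases hbip x y hadj with ⟨h, _⟩ | ⟨_, h⟩
    · exact hx h
    · exact hy h
  constructor
  · rintro ⟨hbic, hUA, hUB, hmax⟩
    have hmaxB : ∀ s ∈ Aᶜ, s ∉ U → ∃ a ∈ U ∩ A, ¬ G'.Adj a s := by
      intro s hs hsU
      by_contra hcon
      push_neg at hcon
      have hbicW : IsBicliqueOn G' A Aᶜ (U ∪ {s}) := by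
        rintro a ⟨haU | haS, haA⟩ b ⟨hbU | hbS, hbB⟩
        · exact hbic a ⟨haU, haA⟩ b ⟨hbU, hbB⟩
        · exact (Set.eq_of_mem_singleton hbS) ▸ hcon a ⟨haU, haA⟩
        · exact absurd haA (Set.eq_of_mem_singleton haS ▸ hs)
        · exact absurd haA (Set.eq_of_mem_singleton haS ▸ hs)
      have := hmax (U ∪ {s}) hbicW Set.subset_union_left
      exact hsU (this ▸ Set.mem_union_right U rfl)
    have hmaxA : ∀ s ∈ A, s ∉ U → ∃ b ∈ U ∩ Aᶜ, ¬ G'.Adj b s := by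
      intro s hs hsU
      by_contra hcon
      push_neg at hcon
      have hbicW : IsBicliqueOn G' A Aᶜ (U ∪ {s}) := by
        rintro a ⟨haU | haS, haA⟩ b ⟨hbU | hbS, hbB⟩
        · exact hbic a ⟨haU, haA⟩ b ⟨hbU, hbB⟩
        · exact absurd (Set.eq_of_mem_singleton hbS ▸ hbB) (by simpa using hs)
        · exact Set.eq_of_mem_singleton haS ▸ (hcon b ⟨hbU, hbB⟩).symm
        · exact absurd (Set.eq_of_mem_singleton hbS ▸ hbB) (by simpa using hs)
      have := hmax (U ∪ {s}) hbicW Set.subset_union_left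
      exact hsU (this ▸ Set.mem_union_right U rfl)
    refine ⟨U ∩ A, U ∩ Aᶜ, ?_, ?_, ?_⟩
    · obtain ⟨a0, ha0U, ha0A⟩ := hUA
      intro h
      exact (h ▸ (⟨ha0U, ha0A⟩ : a0 ∈ U ∩ A) : a0 ∈ U ∩ Aᶜ).2 ha0A
    · exact fullcomp_helper G' A U hnA hbic hUA hmaxB
    · have hbic' : ∀ a ∈ U ∩ Aᶜ, ∀ b ∈ U ∩ Aᶜᶜ, G'.Adj a b := by
        rw [compl_compl]
        intro a ha b hb
        exact (hbic b hb a ha).symm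
      have hmaxB' : ∀ s ∈ Aᶜᶜ, s ∉ U → ∃ a ∈ U ∩ Aᶜ, ¬ G'.Adj a s := by
        rw [compl_compl]; exact hmaxA
      exact fullcomp_helper G' Aᶜ U hnB hbic' hUB hmaxB'
  · rintro ⟨C₁, C₂, hne, h1, h2⟩
    have hdisj : Disjoint C₁ C₂ := comps_disjoint_aux G'ᶜ Uᶜ C₁ C₂ h1.1 h2.1 hne
    have hsplit : ∀ C₁' C₂' : Set V, IsFullCompOf G'ᶜ Uᶜ C₁' → IsFullCompOf G'ᶜ Uᶜ C₂' →
        Disjoint C₁' C₂' → C₁' ⊆ A ∨ C₁' ⊆ Aᶜ := by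
      intro C₁' C₂' h1' h2' hdisj'
      by_cases hx : ∃ a ∈ C₁', a ∈ A
      · left
        intro v hv
        by_contra hvA
        obtain ⟨a, haC, haA⟩ := hx
        obtain ⟨c, hc⟩ := h2'.1.1
        rcases (em (c ∈ A)) with hcA | hcA
        · exact same_part_aux G' A U C₁' C₂' hnA h1'.1.2.2.2 hdisj' h2'.1.2.1
            haC haA hc hcA
        · exact same_part_aux G' Aᶜ U C₁' C₂' hnB h1'.1.2.2.2 hdisj' h2'.1.2.1
            hv hvA hc hcA
      · right
        intro v hv hvA
        exact hx ⟨v, hv, hvA⟩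
    rcases hsplit C₁ C₂ h1 h2 hdisj with hs1 | hs1 <;>
      rcases hsplit C₂ C₁ h2 h1 hdisj.symm with hs2 | hs2
    · obtain ⟨a, ha⟩ := h1.1.1
      obtain ⟨c, hc⟩ := h2.1.1
      exact absurd (same_part_aux G' A U C₁ C₂ hnA h1.1.2.2.2 hdisj h2.1.2.1
        ha (hs1 ha) hc (hs2 hc)) (fun h => h)
    · exact backward_core G' A U C₁ C₂ hnA hnB h1 h2 hdisj hs1 hs2
    · have := backward_core G' A U C₂ C₁ hnA hnB h2 h1 hdisj.symm hs2 hs1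
      exact this
    · obtain ⟨a, ha⟩ := h1.1.1
      obtain ⟨c, hc⟩ := h2.1.1
      exact absurd (same_part_aux G' Aᶜ U C₁ C₂ hnB h1.1.2.2.2 hdisj h2.1.2.1
        ha (hs1 ha) hc (hs2 hc)) (fun h => h)
end

section
/- Let G be a connected graph and L(G) its line graph. If G' is a line graph and S is a minimal separator of G', then G' − S has exactly two connected components, both of which are full components associated to S. -/
open SimpleGraph

universe u

section Aux

variable {V : Type u}

/-- If two components (in the sense of `IsCompOf`) meet, they are equal: subset direction. -/
lemma comp_subset_of_mem {G : SimpleGraph V} {S C C' : Set V}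
    (hC : IsCompOf G S C) (hC' : IsCompOf G S C') {u : V} (hu : u ∈ C) (hu' : u ∈ C') :
    C' ⊆ C := by
  obtain ⟨-, hdisj', hconn', -⟩ := hC'
  suffices h : ∀ x y : C', (G.induce C').Walk x y → ↑x ∈ C → ↑y ∈ C by
    intro v hv
    obtain ⟨w⟩ := hconn' ⟨u, hu'⟩ ⟨v, hv⟩
    exact h _ _ w hu
  intro x y w
  induction w with
  | nil => exact id
  | @cons a b c hab p ih =>
    intro ha
    refine ih (hC.2.2.2 a.1 ha b.1 hab ?_)
    exact fun hb => hdisj'.ne_of_mem b.2 hb rfl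

lemma comp_eq_of_mem {G : SimpleGraph V} {S C C' : Set V}
    (hC : IsCompOf G S C) (hC' : IsCompOf G S C') {u : V} (hu : u ∈ C) (hu' : u ∈ C') :
    C = C' :=
  Set.Subset.antisymm (comp_subset_of_mem hC' hC hu' hu) (comp_subset_of_mem hC hC' hu hu')

/-- Line graph reachability from a walk between endpoints. -/
lemma lineGraph_reach_of_walk {G : SimpleGraph V} :
    ∀ {u v : V}, G.Walk u v → ∀ (e f : G.edgeSet),
      u ∈ (e : Sym2 V) → v ∈ (f : Sym2 V) → G.lineGraph.Reachable e f := by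
  intro u v w
  induction w with
  | nil =>
    intro e f hu hv
    by_cases h : e = f
    · exact h ▸ Reachable.refl e
    · exact Adj.reachable ⟨h, _, hu, hv⟩
  | @cons a b c hab p ih =>
    intro e f hu hv
    have hg : s(a, b) ∈ G.edgeSet := hab
    have h1 : G.lineGraph.Reachable e ⟨s(a, b), hg⟩ := by
      by_cases h : e = ⟨s(a, b), hg⟩
      · exact h ▸ Reachable.refl e
      · exact Adj.reachable ⟨h, a, hu, Sym2.mem_mk_left a b⟩
    exact h1.trans (ih ⟨s(a, b), hg⟩ f (Sym2.mem_mk_right a b) hv)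

/-- A walk from inside `C` to outside `C` crosses the boundary. -/
lemma walk_cross {W : Type u} {H : SimpleGraph W} {C : Set W} :
    ∀ {a b : W}, H.Walk a b → a ∈ C → b ∉ C →
      ∃ p q, p ∈ C ∧ q ∉ C ∧ H.Adj p q := by
  intro a b w
  induction w with
  | nil => intro h h'; exact absurd h h'
  | @cons a b c hab p ih =>
    intro ha hc
    by_cases hb : b ∈ C
    · exact ih hb hc
    · exact ⟨a, b, ha, hb, hab⟩

/-- Line graphs are claw-free. -/
lemma lineGraph_no_claw {G : SimpleGraph V} {s a b c : G.edgeSet}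
    (hsa : G.lineGraph.Adj s a) (hsb : G.lineGraph.Adj s b) (hsc : G.lineGraph.Adj s c)
    (hab : ¬ G.lineGraph.Adj a b) (hac : ¬ G.lineGraph.Adj a c)
    (hbc : ¬ G.lineGraph.Adj b c)
    (hab' : a ≠ b) (hac' : a ≠ c) (hbc' : b ≠ c) : False := by
  obtain ⟨-, va, hva_s, hva⟩ := hsa
  obtain ⟨-, vb, hvb_s, hvb⟩ := hsb
  obtain ⟨-, vc, hvc_s, hvc⟩ := hsc
  have heq : s(((s : Sym2 V)).out.1, ((s : Sym2 V)).out.2) = (s : Sym2 V) := by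
    exact Quot.out_eq _
  rw [SetLike.mem_coe, ← heq, Sym2.mem_iff] at hva_s hvb_s hvc_s
  rcases hva_s with h1 | h1 <;> rcases hvb_s with h2 | h2 <;> rcases hvc_s with h3 | h3
  · exact hab ⟨hab', va, hva, (h1.trans h2.symm) ▸ hvb⟩
  · exact hab ⟨hab', va, hva, (h1.trans h2.symm) ▸ hvb⟩
  · exact hac ⟨hac', va, hva, (h1.trans h3.symm) ▸ hvc⟩
  · exact hbc ⟨hbc', vb, hvb, (h2.trans h3.symm) ▸ hvc⟩
  · exact hbc ⟨hbc', vb, hvb, (h2.trans h3.symm) ▸ hvc⟩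
  · exact hac ⟨hac', va, hva, (h1.trans h3.symm) ▸ hvc⟩
  · exact hab ⟨hab', va, hva, (h1.trans h2.symm) ▸ hvb⟩
  · exact hab ⟨hab', va, hva, (h1.trans h2.symm) ▸ hvb⟩

end Aux

/-- Let `G` be a connected graph and `G' = L(G)` its line graph. If `S` is a minimal
separator of `G'`, then `G' − S` has exactly two connected components, both of which
are full components associated to `S`. -/
theorem stmt5 {V : Type u} [Fintype V] (G : SimpleGraph V) (hconn : G.Connected)
    (S : Set G.edgeSet) (hS : IsMinSep G.lineGraph S) :
    ∃ C₁ C₂ : Set G.edgeSet, C₁ ≠ C₂ ∧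
      IsFullCompOf G.lineGraph S C₁ ∧ IsFullCompOf G.lineGraph S C₂ ∧
      ∀ C, IsCompOf G.lineGraph S C → C = C₁ ∨ C = C₂ := by
  obtain ⟨C₁, C₂, hne, hf1, hf2⟩ := hS
  refine ⟨C₁, C₂, hne, hf1, hf2, ?_⟩
  intro C hC
  by_contra hcon
  push_neg at hcon
  obtain ⟨hC1, hC2⟩ := hcon
  have hdis1 : ∀ x, x ∈ C → x ∉ C₁ := fun x hx hx1 => hC1 (comp_eq_of_mem hC hf1.1 hx hx1)
  have hdis2 : ∀ x, x ∈ C → x ∉ C₂ := fun x hx hx2 => hC2 (comp_eq_of_mem hC hf2.1 hx hx2)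
  have hdis12 : ∀ x, x ∈ C₁ → x ∉ C₂ := fun x hx hx2 => hne (comp_eq_of_mem hf1.1 hf2.1 hx hx2)
  obtain ⟨e₀, he₀⟩ := hC.1
  obtain ⟨f₀, hf₀⟩ := hf1.1.1
  have hreach : G.lineGraph.Reachable e₀ f₀ := by
    obtain ⟨w⟩ := hconn ((e₀ : Sym2 V).out.1) ((f₀ : Sym2 V).out.1)
    exact lineGraph_reach_of_walk w e₀ f₀ (Sym2.out_fst_mem _) (Sym2.out_fst_mem _)
  obtain ⟨w⟩ := hreach
  obtain ⟨p, q, hp, hq, hpq⟩ := walk_cross w he₀ (hdis1 f₀ · hf₀)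
  have hqS : q ∈ S := by
    by_contra hqS
    exact hq (hC.2.2.2 p hp q hpq hqS)
  have hq1 : q ∈ nbhd G.lineGraph C₁ := hf1.2 ▸ hqS
  have hq2 : q ∈ nbhd G.lineGraph C₂ := hf2.2 ▸ hqS
  obtain ⟨-, a, ha, haq⟩ := hq1
  obtain ⟨-, b, hb, hbq⟩ := hq2
  have hpS : p ∉ S := fun h => hC.2.1.ne_of_mem hp h rfl
  have haS : a ∉ S := fun h => hf1.1.2.1.ne_of_mem ha h rfl
  have hbS : b ∉ S := fun h => hf2.1.2.1.ne_of_mem hb h rfl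
  have hab : ¬ G.lineGraph.Adj a b := fun h => hdis12 a ha (hf2.1.2.2.2 b hb a h.symm haS)
  have hap : ¬ G.lineGraph.Adj a p := fun h => hdis1 p hp (hf1.1.2.2.2 a ha p h hpS)
  have hbp : ¬ G.lineGraph.Adj b p := fun h => hdis2 p hp (hf2.1.2.2.2 b hb p h hpS)
  have hab' : a ≠ b := fun h => hdis12 a ha (h ▸ hb)
  have hap' : a ≠ p := fun h => hdis1 p hp (h ▸ ha)
  have hbp' : b ≠ p := fun h => hdis2 p hp (h ▸ hb)
  exact lineGraph_no_claw haq.symm hbq.symm hpq.symm hab hap hbp hab' hap' hbp'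
end

section
/- Let G be a connected graph and G' its line graph. Then G has a non-trivial connected cut (S, V \ S) with at least k cut edges if and only if G' has a minimal separator of size at least k. -/
open SimpleGraph

universe u

/-- `(S, Sᶜ)` is a connected cut: both sides induce connected (hence nonempty) subgraphs. -/
def IsConnCut {V : Type u} (G : SimpleGraph V) (S : Set V) : Prop :=
  (G.induce S).Connected ∧ (G.induce Sᶜ).Connected

/-- The size of the cut `(S, Sᶜ)`: the number of edges with one endpoint in `S`
and the other outside `S` (counted as ordered pairs with first coordinate in `S`). -/
noncomputable def cutSize {V : Type u} (G : SimpleGraph V) (S : Set V) : ℕ :=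
  {p : V × V | p.1 ∈ S ∧ p.2 ∉ S ∧ G.Adj p.1 p.2}.ncard

section Aux

variable {V : Type u} {G : SimpleGraph V}

lemma edge_adj' (e : G.edgeSet) {x y : V} (hx : x ∈ (e : Sym2 V)) (hy : y ∈ (e : Sym2 V))
    (hxy : x ≠ y) : G.Adj x y := by
  have h := e.2
  rw [(Sym2.mem_and_mem_iff hxy).mp ⟨hx, hy⟩] at h
  exact h

lemma edge_rep' (e : G.edgeSet) : ∃ x y : V, x ≠ y ∧ (e : Sym2 V) = s(x, y) := by
  obtain ⟨⟨x, y⟩, h⟩ := (e : Sym2 V).exists_rep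
  have hrep : (e : Sym2 V) = s(x, y) := h.symm
  refine ⟨x, y, ?_, hrep⟩
  have h2 := e.2
  rw [hrep] at h2
  exact G.ne_of_adj h2

lemma edge_split' (e : G.edgeSet) {S : Set V} (h1 : ∃ v ∈ (e : Sym2 V), v ∈ S)
    (h2 : ∃ v ∈ (e : Sym2 V), v ∉ S) :
    ∃ a b, a ∈ S ∧ b ∉ S ∧ (e : Sym2 V) = s(a, b) := by
  obtain ⟨x, y, hxy, hrep⟩ := edge_rep' e
  obtain ⟨a, ha, haS⟩ := h1
  obtain ⟨b, hb, hbS⟩ := h2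
  rw [hrep, Sym2.mem_iff] at ha hb
  rcases ha with ha | ha <;> rcases hb with hb | hb
  · exact absurd (ha ▸ haS) (hb ▸ hbS)
  · exact ⟨x, y, ha ▸ haS, hb ▸ hbS, hrep⟩
  · exact ⟨y, x, ha ▸ haS, hb ▸ hbS, hrep.trans (Sym2.eq_swap)⟩
  · exact absurd (ha ▸ haS) (hb ▸ hbS)

lemma walk_first_step' {S : Set V} (a b : S) (w : (G.induce S).Walk a b) (hne : a ≠ b) :
    ∃ w' ∈ S, G.Adj a.1 w' := by
  cases w with
  | nil => exact absurd rfl hne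
  | @cons _ c _ h _ => exact ⟨c.1, c.2, h⟩

lemma posDeg' [Finite V] {S : Set V} (hc : (G.induce S).Connected) (h2 : 2 ≤ S.ncard)
    {u : V} (hu : u ∈ S) : ∃ w ∈ S, G.Adj u w := by
  obtain ⟨v, hv, hne⟩ : ∃ v ∈ S, v ≠ u := by
    by_contra h
    push_neg at h
    have hsub : S ⊆ {u} := fun x hx => h x hx
    have := Set.ncard_le_ncard hsub (Set.finite_singleton u)
    rw [Set.ncard_singleton] at this
    omega
  obtain ⟨w⟩ := hc.preconnected ⟨u, hu⟩ ⟨v, hv⟩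
  exact walk_first_step' _ _ w (by simp [Subtype.ext_iff, hne.symm])

lemma lineStep' {A : Set V} (e f : G.edgeSet)
    (he : ∀ v ∈ (e : Sym2 V), v ∈ A) (hf : ∀ v ∈ (f : Sym2 V), v ∈ A)
    (v : V) (hv1 : v ∈ (e : Sym2 V)) (hv2 : v ∈ (f : Sym2 V)) :
    ((G.lineGraph).induce {g : G.edgeSet | ∀ v ∈ (g : Sym2 V), v ∈ A}).Reachable
      ⟨e, he⟩ ⟨f, hf⟩ := by
  by_cases hef : e = f
  · subst hef; rfl
  · refine SimpleGraph.Adj.reachable ?_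
    show (G.lineGraph).Adj e f
    exact lineGraph_adj_iff_exists.mpr ⟨hef, v, hv1, hv2⟩

lemma lineReach' {A : Set V} (a b : ↥A) (w : (G.induce A).Walk a b) :
    ∀ (e f : G.edgeSet) (he : ∀ v ∈ (e : Sym2 V), v ∈ A) (hf : ∀ v ∈ (f : Sym2 V), v ∈ A),
      ↑a ∈ (e : Sym2 V) → ↑b ∈ (f : Sym2 V) →
      ((G.lineGraph).induce {g : G.edgeSet | ∀ v ∈ (g : Sym2 V), v ∈ A}).Reachable
        ⟨e, he⟩ ⟨f, hf⟩ := by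
  induction w with
  | nil =>
    intro e f he hf hae hbf
    exact lineStep' e f he hf _ hae hbf
  | @cons a c b h p ih =>
    intro e f he hf hae hbf
    have hadj : G.Adj ↑a ↑c := h
    have hg : ∀ v ∈ ((⟨s(↑a, ↑c), hadj⟩ : G.edgeSet) : Sym2 V), v ∈ A := by
      intro v hv
      rcases Sym2.mem_iff.mp hv with rfl | rfl
      · exact a.2
      · exact c.2
    exact (lineStep' e ⟨s(↑a, ↑c), hadj⟩ he hg _ hae (Sym2.mem_mk_left _ _)).trans
      (ih _ f hg hf (Sym2.mem_mk_right _ _) hbf)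

lemma edgeEndsReach' {A : Set V} (e : G.edgeSet) (heA : ∀ v ∈ (e : Sym2 V), v ∈ A)
    {x y : V} (hx : x ∈ (e : Sym2 V)) (hy : y ∈ (e : Sym2 V)) :
    (G.induce A).Reachable ⟨x, heA x hx⟩ ⟨y, heA y hy⟩ := by
  by_cases hxy : x = y
  · subst hxy; rfl
  · refine SimpleGraph.Adj.reachable ?_
    show G.Adj x y
    exact edge_adj' e hx hy hxy

lemma vertReach' {A : Set V} {C : Set G.edgeSet}
    (hCA : ∀ e : G.edgeSet, e ∈ C → ∀ v ∈ (e : Sym2 V), v ∈ A)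
    (a b : ↥C) (w : ((G.lineGraph).induce C).Walk a b) :
    ∀ (x y : V) (hx : x ∈ ((a : G.edgeSet) : Sym2 V)) (hy : y ∈ ((b : G.edgeSet) : Sym2 V)),
      (G.induce A).Reachable ⟨x, hCA _ a.2 x hx⟩ ⟨y, hCA _ b.2 y hy⟩ := by
  induction w with
  | nil => intro x y hx hy; exact edgeEndsReach' _ _ hx hy
  | @cons a c b h p ih =>
    intro x y hx hy
    have hadj : (G.lineGraph).Adj ↑a ↑c := h
    obtain ⟨hne, v, hv1, hv2⟩ := lineGraph_adj_iff_exists.mp hadj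
    exact (edgeEndsReach' (G := G) (a : G.edgeSet) (hCA _ a.2) hx hv1).trans
      (ih v y hv2 hy)

lemma walk_stay' {W : Type u} {H : SimpleGraph W} {S C D : Set W}
    (hCS : Disjoint C S) (hD : ∀ u ∈ D, ∀ v, H.Adj u v → v ∉ S → v ∈ D)
    (a b : ↥C) (w : (H.induce C).Walk a b) (ha : ↑a ∈ D) : ↑b ∈ D := by
  induction w with
  | nil => exact ha
  | @cons a c b h p ih =>
    exact ih (hD a.1 ha c.1 h (Set.disjoint_left.mp hCS c.2))

lemma comp_eq' {W : Type u} {H : SimpleGraph W} {S C₁ C₂ : Set W}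
    (h1 : IsCompOf H S C₁) (h2 : IsCompOf H S C₂) {x : W} (hx1 : x ∈ C₁) (hx2 : x ∈ C₂) :
    C₁ = C₂ := by
  obtain ⟨-, hd1, hc1, hcl1⟩ := h1
  obtain ⟨-, hd2, hc2, hcl2⟩ := h2
  apply Set.Subset.antisymm
  · intro y hy
    exact (hc1.preconnected ⟨x, hx1⟩ ⟨y, hy⟩).elim fun w => walk_stay' hd1 hcl2 _ _ w hx2
  · intro y hy
    exact (hc2.preconnected ⟨x, hx2⟩ ⟨y, hy⟩).elim fun w => walk_stay' hd2 hcl1 _ _ w hx1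

lemma fullcomp_of_cut [Finite V] {A : Set V} (hA : (G.induce A).Connected)
    (h2 : 2 ≤ A.ncard) :
    IsFullCompOf G.lineGraph
      {e : G.edgeSet | (∃ v ∈ (e : Sym2 V), v ∈ A) ∧ ∃ v ∈ (e : Sym2 V), v ∉ A}
      {e : G.edgeSet | ∀ v ∈ (e : Sym2 V), v ∈ A} := by
  have hAne : A.Nonempty := by
    rcases Set.eq_empty_or_nonempty A with h | h
    · rw [h] at h2; simp at h2
    · exact h
  obtain ⟨u, hu⟩ := hAne
  obtain ⟨w, hw, huw⟩ := posDeg' hA h2 hu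
  have heC : (⟨s(u, w), huw⟩ : G.edgeSet) ∈ {e : G.edgeSet | ∀ v ∈ (e : Sym2 V), v ∈ A} := by
    intro v hv
    rcases Sym2.mem_iff.mp hv with rfl | rfl
    · exact hu
    · exact hw
  refine ⟨⟨⟨_, heC⟩, ?_, ?_, ?_⟩, ?_⟩
  · -- Disjoint
    rw [Set.disjoint_left]
    rintro e he ⟨-, v, hv, hvA⟩
    exact hvA (he v hv)
  · -- Connected
    rw [connected_iff]
    refine ⟨?_, ⟨⟨_, heC⟩⟩⟩
    rintro ⟨e, he⟩ ⟨f, hf⟩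
    obtain ⟨x, y, -, hex⟩ := edge_rep' e
    obtain ⟨x', y', -, hfx⟩ := edge_rep' f
    have hxe : x ∈ (e : Sym2 V) := by rw [hex]; exact Sym2.mem_mk_left _ _
    have hx'f : x' ∈ (f : Sym2 V) := by rw [hfx]; exact Sym2.mem_mk_left _ _
    exact (hA.preconnected ⟨x, he x hxe⟩ ⟨x', hf x' hx'f⟩).elim fun w =>
      lineReach' _ _ w e f he hf hxe hx'f
  · -- closure
    rintro e he g hadj hgF
    obtain ⟨hne, v, hve, hvg⟩ := lineGraph_adj_iff_exists.mp hadj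
    intro z hz
    by_contra hzA
    exact hgF ⟨⟨v, hvg, he v hve⟩, ⟨z, hz, hzA⟩⟩
  · -- nbhd = F
    ext g
    constructor
    · rintro ⟨hgC, e, he, hadj⟩
      obtain ⟨hne, v, hve, hvg⟩ := lineGraph_adj_iff_exists.mp hadj
      simp only [Set.mem_setOf_eq, not_forall] at hgC
      obtain ⟨z, hz, hzA⟩ := hgC
      exact ⟨⟨v, hvg, he v hve⟩, ⟨z, hz, hzA⟩⟩
    · rintro ⟨hg1, hg2⟩
      obtain ⟨a, b, haA, hbA, hrep⟩ := edge_split' g hg1 hg2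
      obtain ⟨c, hc, hac⟩ := posDeg' hA h2 haA
      have heC' : (⟨s(a, c), hac⟩ : G.edgeSet) ∈
          {e : G.edgeSet | ∀ v ∈ (e : Sym2 V), v ∈ A} := by
        intro v hv
        rcases Sym2.mem_iff.mp hv with rfl | rfl
        · exact haA
        · exact hc
      have hbg : b ∈ (g : Sym2 V) := by rw [hrep]; exact Sym2.mem_mk_right _ _
      have hag : a ∈ (g : Sym2 V) := by rw [hrep]; exact Sym2.mem_mk_left _ _
      have hgC : g ∉ {e : G.edgeSet | ∀ v ∈ (e : Sym2 V), v ∈ A} := by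
        intro hall
        exact hbA (hall b hbg)
      refine ⟨hgC, ⟨s(a, c), hac⟩, heC', ?_⟩
      refine lineGraph_adj_iff_exists.mpr ⟨?_, a, Sym2.mem_mk_left _ _, hag⟩
      intro hgeq
      exact hbA (heC' b (by rw [hgeq]; exact hbg))

end Aux

section Main

variable {V : Type u}

lemma dir_mp [Fintype V] (G : SimpleGraph V) (hconn : G.Connected) (k : ℕ)
    (h : ∃ S : Set V, IsConnCut G S ∧ 2 ≤ S.ncard ∧ 2 ≤ Sᶜ.ncard ∧ k ≤ cutSize G S) :
    ∃ S : Set G.edgeSet, IsMinSep G.lineGraph S ∧ k ≤ S.ncard := by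
  classical
  obtain ⟨S, ⟨hS, hSc⟩, h2S, h2Sc, hk⟩ := h
  have hNV : Nonempty V := hconn.nonempty
  set F : Set G.edgeSet :=
    {e : G.edgeSet | (∃ v ∈ (e : Sym2 V), v ∈ S) ∧ ∃ v ∈ (e : Sym2 V), v ∉ S} with hF
  have h1 := fullcomp_of_cut (G := G) hS h2S
  have h2' := fullcomp_of_cut (G := G) hSc h2Sc
  have hFeq : {e : G.edgeSet | (∃ v ∈ (e : Sym2 V), v ∈ Sᶜ) ∧ ∃ v ∈ (e : Sym2 V), v ∉ Sᶜ}
      = F := by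
    ext e
    simp only [hF, Set.mem_setOf_eq, Set.mem_compl_iff, not_not]
    tauto
  rw [hFeq] at h2'
  have hCne : {e : G.edgeSet | ∀ v ∈ (e : Sym2 V), v ∈ S}
      ≠ {e : G.edgeSet | ∀ v ∈ (e : Sym2 V), v ∈ Sᶜ} := by
    intro heq
    obtain ⟨e, he⟩ := h1.1.1
    obtain ⟨x, y, -, hrep⟩ := edge_rep' e
    have hxe : x ∈ (e : Sym2 V) := by rw [hrep]; exact Sym2.mem_mk_left _ _
    have hxS : x ∈ S := he x hxe
    have hxSc : x ∈ Sᶜ := (heq ▸ he) x hxe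
    exact hxSc hxS
  refine ⟨F, ⟨_, _, hCne, h1, h2'⟩, ?_⟩
  -- counting
  set φ : G.edgeSet → V × V := fun e =>
    if h : ∃ p : V × V, p.1 ∈ S ∧ p.2 ∉ S ∧ (e : Sym2 V) = s(p.1, p.2) then h.choose
    else Classical.arbitrary _ with hφ
  have himg : {p : V × V | p.1 ∈ S ∧ p.2 ∉ S ∧ G.Adj p.1 p.2} ⊆ φ '' F := by
    rintro ⟨u, v⟩ ⟨huS, hvS, hadj⟩
    have heF : (⟨s(u, v), hadj⟩ : G.edgeSet) ∈ F :=
      ⟨⟨u, Sym2.mem_mk_left _ _, huS⟩, ⟨v, Sym2.mem_mk_right _ _, hvS⟩⟩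
    refine ⟨⟨s(u, v), hadj⟩, heF, ?_⟩
    have hex : ∃ p : V × V, p.1 ∈ S ∧ p.2 ∉ S ∧
        ((⟨s(u, v), hadj⟩ : G.edgeSet) : Sym2 V) = s(p.1, p.2) := ⟨(u, v), huS, hvS, rfl⟩
    have hval : φ ⟨s(u, v), hadj⟩ = hex.choose := by
      simp only [hφ]; exact dif_pos hex
    obtain ⟨hq1, hq2, hq3⟩ := hex.choose_spec
    rw [hval]
    have := Sym2.eq_iff.mp hq3
    rcases this with ⟨h1', h2''⟩ | ⟨h1', h2''⟩
    · exact Prod.ext h1'.symm h2''.symm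
    · exact absurd (h1' ▸ huS) hq2
  have hle : cutSize G S ≤ F.ncard := by
    calc cutSize G S ≤ (φ '' F).ncard := Set.ncard_le_ncard himg (Set.toFinite _)
    _ ≤ F.ncard := Set.ncard_image_le (Set.toFinite _)
  omega

lemma dir_mpr [Fintype V] (G : SimpleGraph V) (hconn : G.Connected) (k : ℕ)
    (h : ∃ S : Set G.edgeSet, IsMinSep G.lineGraph S ∧ k ≤ S.ncard) :
    ∃ S : Set V, IsConnCut G S ∧ 2 ≤ S.ncard ∧ 2 ≤ Sᶜ.ncard ∧ k ≤ cutSize G S := by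
  classical
  obtain ⟨Sep, ⟨C₁, C₂, hC12, ⟨hcomp1, hnb1⟩, ⟨hcomp2, hnb2⟩⟩, hk⟩ := h
  have hNV : Nonempty V := hconn.nonempty
  set A : Set V := {v : V | ∃ e ∈ C₁, v ∈ ((e : G.edgeSet) : Sym2 V)} with hAdef
  set B : Set V := {v : V | ∃ e ∈ C₂, v ∈ ((e : G.edgeSet) : Sym2 V)} with hBdef
  have hdis : ∀ e, e ∈ C₁ → e ∈ C₂ → False := by
    intro e h1 h2
    exact hC12 (comp_eq' hcomp1 hcomp2 h1 h2)
  have hAB : ∀ v, v ∈ A → v ∈ B → False := by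
    rintro v ⟨e, he, hve⟩ ⟨f, hf, hvf⟩
    by_cases hef : e = f
    · exact hdis e he (hef ▸ hf)
    · have hadj : (G.lineGraph).Adj e f := lineGraph_adj_iff_exists.mpr ⟨hef, v, hve, hvf⟩
      have hfS : f ∉ Sep := Set.disjoint_left.mp hcomp2.2.1 hf
      exact hdis f (hcomp1.2.2.2 e he f hadj hfS) hf
  have hCA : ∀ e : G.edgeSet, e ∈ C₁ → ∀ v ∈ (e : Sym2 V), v ∈ A := fun e he v hv => ⟨e, he, hv⟩
  have hCB : ∀ e : G.edgeSet, e ∈ C₂ → ∀ v ∈ (e : Sym2 V), v ∈ B := fun e he v hv => ⟨e, he, hv⟩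
  have hBA : ∀ {v : V}, v ∈ B → v ∈ Aᶜ := fun {v} hv hvA => hAB v hvA hv
  have hCBc : ∀ e : G.edgeSet, e ∈ C₂ → ∀ v ∈ (e : Sym2 V), v ∈ Aᶜ :=
    fun e he v hv => hBA (hCB e he v hv)
  have hSsplit : ∀ e : G.edgeSet, e ∈ Sep →
      ∃ a b, a ∈ A ∧ b ∈ B ∧ (e : Sym2 V) = s(a, b) := by
    intro e heS
    have h1 : e ∈ nbhd G.lineGraph C₁ := by rw [hnb1]; exact heS
    have h2 : e ∈ nbhd G.lineGraph C₂ := by rw [hnb2]; exact heS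
    obtain ⟨-, f, hf, hadjf⟩ := h1
    obtain ⟨-, f', hf', hadjf'⟩ := h2
    obtain ⟨-, a, haf, hae⟩ := lineGraph_adj_iff_exists.mp hadjf
    obtain ⟨-, b, hbf, hbe⟩ := lineGraph_adj_iff_exists.mp hadjf'
    have haA : a ∈ A := ⟨f, hf, haf⟩
    have hbB : b ∈ B := ⟨f', hf', hbf⟩
    have hab : a ≠ b := fun hh => hAB a haA (hh ▸ hbB)
    exact ⟨a, b, haA, hbB, (Sym2.mem_and_mem_iff hab).mp ⟨hae, hbe⟩⟩
  -- two elements on each side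
  obtain ⟨e₁, he₁⟩ := hcomp1.1
  obtain ⟨e₂, he₂⟩ := hcomp2.1
  obtain ⟨x₁, y₁, hxy₁, hrep₁⟩ := edge_rep' e₁
  obtain ⟨x₂, y₂, hxy₂, hrep₂⟩ := edge_rep' e₂
  have hx₁ : x₁ ∈ A := hCA e₁ he₁ x₁ (by rw [hrep₁]; exact Sym2.mem_mk_left _ _)
  have hy₁ : y₁ ∈ A := hCA e₁ he₁ y₁ (by rw [hrep₁]; exact Sym2.mem_mk_right _ _)
  have hx₂ : x₂ ∈ B := hCB e₂ he₂ x₂ (by rw [hrep₂]; exact Sym2.mem_mk_left _ _)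
  have hy₂ : y₂ ∈ B := hCB e₂ he₂ y₂ (by rw [hrep₂]; exact Sym2.mem_mk_right _ _)
  have h2A : 2 ≤ A.ncard := by
    have := (Set.one_lt_ncard_iff (Set.toFinite A)).mpr ⟨x₁, y₁, hx₁, hy₁, hxy₁⟩
    omega
  have h2Ac : 2 ≤ Aᶜ.ncard := by
    have := (Set.one_lt_ncard_iff (Set.toFinite Aᶜ)).mpr ⟨x₂, y₂, hBA hx₂, hBA hy₂, hxy₂⟩
    omega
  -- G[A] connected
  have hconnA : (G.induce A).Connected := by
    rw [connected_iff]
    refine ⟨?_, ⟨⟨x₁, hx₁⟩⟩⟩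
    rintro ⟨x, hx⟩ ⟨y, hy⟩
    obtain ⟨e, he, hxe⟩ := hx
    obtain ⟨f, hf, hyf⟩ := hy
    exact (hcomp1.2.2.1.preconnected ⟨e, he⟩ ⟨f, hf⟩).elim fun w =>
      vertReach' hCA ⟨e, he⟩ ⟨f, hf⟩ w x y hxe hyf
  -- every vertex outside A reaches B inside Aᶜ
  have key : ∀ (x a : V), G.Walk x a → a ∈ A → ∀ hx : x ∉ A,
      ∃ b, ∃ hb : b ∈ B, (G.induce Aᶜ).Reachable ⟨x, hx⟩ ⟨b, hBA hb⟩ := by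
    intro x a w
    induction w with
    | nil => intro ha hx; exact absurd ha hx
    | @cons x z a h p ih =>
      intro ha hx
      by_cases hz : z ∈ A
      · obtain ⟨e, he, hze⟩ := hz
        have hgC : (⟨s(x, z), h⟩ : G.edgeSet) ∉ C₁ :=
          fun hg => hx (hCA _ hg x (Sym2.mem_mk_left _ _))
        have hgne : e ≠ (⟨s(x, z), h⟩ : G.edgeSet) := fun hgeq => hgC (hgeq ▸ he)
        have hadj : (G.lineGraph).Adj e ⟨s(x, z), h⟩ :=
          lineGraph_adj_iff_exists.mpr ⟨hgne, z, hze, Sym2.mem_mk_right _ _⟩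
        have hgS : (⟨s(x, z), h⟩ : G.edgeSet) ∈ Sep := by
          by_contra hgS
          exact hgC (hcomp1.2.2.2 e he _ hadj hgS)
        obtain ⟨a', b', ha', hb', hrep⟩ := hSsplit _ hgS
        have hb'mem : b' = x ∨ b' = z := by
          have hmem : b' ∈ (s(x, z) : Sym2 V) := by
            rw [show (s(x, z) : Sym2 V) =
              ((⟨s(x, z), h⟩ : G.edgeSet) : Sym2 V) from rfl, hrep]
            exact Sym2.mem_mk_right _ _
          exact Sym2.mem_iff.mp hmem
        rcases hb'mem with rfl | rfl
        · exact ⟨b', hb', Reachable.refl _⟩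
        · exact absurd ⟨e, he, hze⟩ (hBA hb')
      · obtain ⟨b, hb, hr⟩ := ih ha hz
        have hstep : (G.induce Aᶜ).Adj ⟨x, hx⟩ ⟨z, hz⟩ := h
        exact ⟨b, hb, hstep.reachable.trans hr⟩
  -- G[Aᶜ] connected
  have hreachB : ∀ (b b' : V) (hb : b ∈ B) (hb' : b' ∈ B),
      (G.induce Aᶜ).Reachable ⟨b, hBA hb⟩ ⟨b', hBA hb'⟩ := by
    intro b b' hb hb'
    obtain ⟨e, he, hbe⟩ := hb
    obtain ⟨f, hf, hbf⟩ := hb'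
    exact (hcomp2.2.2.1.preconnected ⟨e, he⟩ ⟨f, hf⟩).elim fun w =>
      vertReach' hCBc ⟨e, he⟩ ⟨f, hf⟩ w b b' hbe hbf
  have hconnAc : (G.induce Aᶜ).Connected := by
    rw [connected_iff]
    refine ⟨?_, ⟨⟨x₂, hBA hx₂⟩⟩⟩
    rintro ⟨x, hx⟩ ⟨y, hy⟩
    refine (hconn.preconnected x x₁).elim fun wx => ?_
    refine (hconn.preconnected y x₁).elim fun wy => ?_
    obtain ⟨bx, hbx, hrx⟩ := key x x₁ wx hx₁ hx
    obtain ⟨by', hby, hry⟩ := key y x₁ wy hx₁ hy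
    exact (hrx.trans (hreachB bx by' hbx hby)).trans hry.symm
  -- counting
  set ψ : G.edgeSet → V × V := fun e =>
    if h : ∃ p : V × V, p.1 ∈ A ∧ p.2 ∉ A ∧ (e : Sym2 V) = s(p.1, p.2) then h.choose
    else Classical.arbitrary _ with hψ
  have hψspec : ∀ e ∈ Sep, (ψ e).1 ∈ A ∧ (ψ e).2 ∉ A ∧ (e : Sym2 V) = s((ψ e).1, (ψ e).2) := by
    intro e he
    obtain ⟨a, b, ha, hb, hrep⟩ := hSsplit e he
    have hex : ∃ p : V × V, p.1 ∈ A ∧ p.2 ∉ A ∧ (e : Sym2 V) = s(p.1, p.2) :=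
      ⟨(a, b), ha, hBA hb, hrep⟩
    have hval : ψ e = hex.choose := by simp only [hψ]; exact dif_pos hex
    rw [hval]
    exact hex.choose_spec
  have hmaps : ∀ e ∈ Sep, ψ e ∈ {p : V × V | p.1 ∈ A ∧ p.2 ∉ A ∧ G.Adj p.1 p.2} := by
    intro e he
    obtain ⟨h1', h2', h3'⟩ := hψspec e he
    refine ⟨h1', h2', ?_⟩
    have := e.2
    rw [h3'] at this
    exact this
  have hinj : Set.InjOn ψ Sep := by
    intro e he e' he' heq
    have h3 := (hψspec e he).2.2
    have h3' := (hψspec e' he').2.2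
    apply Subtype.ext
    show (e : Sym2 V) = (e' : Sym2 V)
    rw [h3, h3', heq]
  have hle : Sep.ncard ≤ cutSize G A := by
    show Sep.ncard ≤ {p : V × V | p.1 ∈ A ∧ p.2 ∉ A ∧ G.Adj p.1 p.2}.ncard
    exact Set.ncard_le_ncard_of_injOn ψ hmaps hinj (Set.toFinite _)
  exact ⟨A, ⟨hconnA, hconnAc⟩, h2A, h2Ac, le_trans hk hle⟩

end Main

/-- Let `G` be a connected graph and `G'` its line graph. Then `G` has a non-trivial
connected cut (both sides of size at least two) with at least `k` cut edges if and
only if `G'` has a minimal separator of size at least `k`. -/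
theorem stmt6 {V : Type u} [Fintype V] (G : SimpleGraph V) (hconn : G.Connected) (k : ℕ) :
    (∃ S : Set V, IsConnCut G S ∧ 2 ≤ S.ncard ∧ 2 ≤ Sᶜ.ncard ∧ k ≤ cutSize G S) ↔
    (∃ S : Set G.edgeSet, IsMinSep G.lineGraph S ∧ k ≤ S.ncard) :=
  ⟨dir_mp G hconn k, dir_mpr G hconn k⟩
end

section
/- Let S be a minimal separator of a graph G and C a component of G − S. Let G(C, S) denote the graph obtained from G[C ∪ S] by adding all edges between pairs of vertices of S (completing S into a clique). Then every minimal separator of G(C, S) is also a minimal separator of G. -/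
open SimpleGraph

universe u

/-- The graph `G(C, S)`: the induced subgraph `G[C ∪ S]` with `S` completed into a clique. -/
def GCS {V : Type u} (G : SimpleGraph V) (C S : Set V) : SimpleGraph ↥(C ∪ S) where
  Adj x y := G.Adj x y ∨ ((x : V) ∈ S ∧ (y : V) ∈ S ∧ x ≠ y)
  symm := by
    constructor
    rintro x y (h | ⟨h1, h2, h3⟩)
    · exact Or.inl h.symm
    · exact Or.inr ⟨h2, h1, h3.symm⟩
  loopless := by
    constructor
    rintro x (h | ⟨_, _, h⟩)
    · exact G.irrefl h
    · exact h rfl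

section Helper

variable {α : Type u}

/-- The step relation: an edge of `G` avoiding `T`. -/
def Off (G : SimpleGraph α) (T : Set α) (a b : α) : Prop :=
  G.Adj a b ∧ a ∉ T ∧ b ∉ T

/-- The reachability component of `x` in `G − T`. -/
def Wcomp (G : SimpleGraph α) (T : Set α) (x : α) : Set α :=
  {v | Relation.ReflTransGen (Off G T) x v}

lemma rtg_of_walk {G : SimpleGraph α} {A : Set α} {u v : ↥A}
    (w : (G.induce A).Walk u v) :
    Relation.ReflTransGen (fun a b => G.Adj a b ∧ a ∈ A ∧ b ∈ A) (u : α) (v : α) := by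
  induction w with
  | nil => exact .refl
  | @cons a b c h _ ih => exact .head ⟨h, a.2, b.2⟩ ih

lemma reach_of_rtg {G : SimpleGraph α} {A : Set α} {u v : α} (hu : u ∈ A)
    (h : Relation.ReflTransGen (fun a b => G.Adj a b ∧ a ∈ A ∧ b ∈ A) u v) :
    ∃ hv : v ∈ A, (G.induce A).Reachable ⟨u, hu⟩ ⟨v, hv⟩ := by
  induction h with
  | refl => exact ⟨hu, .refl _⟩
  | @tail b c _ hbc ih =>
      obtain ⟨hb, hr⟩ := ih
      exact ⟨hbc.2.2, hr.trans (SimpleGraph.Adj.reachable (v := (⟨c, hbc.2.2⟩ : A)) hbc.1)⟩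

variable {G : SimpleGraph α} {T : Set α} {x : α}

lemma Wcomp_self : x ∈ Wcomp G T x := Relation.ReflTransGen.refl

lemma Wcomp_not_mem (hx : x ∉ T) {v : α} (hv : v ∈ Wcomp G T x) : v ∉ T := by
  induction hv with
  | refl => exact hx
  | tail _ hbc _ => exact hbc.2.2

lemma Wcomp_tail {v w : α} (hv : v ∈ Wcomp G T x) (h : Off G T v w) : w ∈ Wcomp G T x :=
  Relation.ReflTransGen.tail hv h

lemma Wcomp_rtg_strong {v : α} (h : v ∈ Wcomp G T x) :
    Relation.ReflTransGen (fun a b => G.Adj a b ∧ a ∈ Wcomp G T x ∧ b ∈ Wcomp G T x) x v := by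
  induction h with
  | refl => exact .refl
  | @tail b c hb hbc ih => exact ih.tail ⟨hbc.1, hb, hb.tail hbc⟩

lemma Wcomp_isCompOf (hx : x ∉ T) : IsCompOf G T (Wcomp G T x) := by
  refine ⟨⟨x, Wcomp_self⟩, ?_, ?_, ?_⟩
  · rw [Set.disjoint_left]; exact fun a ha => Wcomp_not_mem hx ha
  · have hne : Nonempty ↥(Wcomp G T x) := ⟨⟨x, Wcomp_self⟩⟩
    refine SimpleGraph.Connected.mk ?_
    intro a b
    obtain ⟨ha', ra⟩ := reach_of_rtg Wcomp_self (Wcomp_rtg_strong a.2)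
    obtain ⟨hb', rb⟩ := reach_of_rtg Wcomp_self (Wcomp_rtg_strong b.2)
    exact (ra.symm.trans rb)
  · intro u hu v hadj hv
    exact Wcomp_tail hu ⟨hadj, Wcomp_not_mem hx hu, hv⟩

lemma Wcomp_nbhd_subset (hx : x ∉ T) : nbhd G (Wcomp G T x) ⊆ T := by
  rintro v ⟨hvW, u, huW, hadj⟩
  by_contra hvT
  exact hvW (Wcomp_tail huW ⟨hadj, Wcomp_not_mem hx huW, hvT⟩)

lemma comp_subset {G : SimpleGraph α} {S C D : Set α} (hC : IsCompOf G S C)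
    (hD : IsCompOf G S D) {u : α} (huC : u ∈ C) (huD : u ∈ D) : C ⊆ D := by
  intro v hv
  obtain ⟨w⟩ := hC.2.2.1.preconnected ⟨u, huC⟩ ⟨v, hv⟩
  have h : Relation.ReflTransGen (fun a b => G.Adj a b ∧ a ∈ C ∧ b ∈ C) u v :=
    rtg_of_walk w
  clear w hv
  induction h with
  | refl => exact huD
  | @tail b c _ hbc ih =>
      exact hD.2.2.2 b ih c hbc.1 (Set.disjoint_left.mp hC.2.1 hbc.2.2)

lemma comp_eq_of_inter {G : SimpleGraph α} {S C D : Set α} (hC : IsCompOf G S C)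
    (hD : IsCompOf G S D) {u : α} (huC : u ∈ C) (huD : u ∈ D) : C = D :=
  Set.Subset.antisymm (comp_subset hC hD huC huD) (comp_subset hD hC huD huC)

lemma val_mem_image {A : Set α} {S' : Set ↥A} {v : α} (hv : v ∈ A) :
    v ∈ Subtype.val '' S' ↔ (⟨v, hv⟩ : ↥A) ∈ S' := by
  constructor
  · rintro ⟨w, hw, rfl⟩
    simpa using hw
  · intro h
    exact ⟨_, h, rfl⟩

end Helper

/-- A full component of `G(C,S) − S'` that avoids `S` lifts to a full component of
`G − val '' S'`. -/
lemma lift_full {V : Type u} {G : SimpleGraph V} {S C : Set V} (hC : IsCompOf G S C)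
    {S' E : Set ↥(C ∪ S)} (hE : IsFullCompOf (GCS G C S) S' E)
    (hES : ∀ e ∈ E, (e : V) ∉ S) :
    IsFullCompOf G (Subtype.val '' S') (Subtype.val '' E) := by
  have hEC : ∀ e ∈ E, (e : V) ∈ C := fun e he => e.2.elim id fun h => absurd h (hES e he)
  have hmemCS : ∀ (u : ↥(C ∪ S)), u ∈ E → ∀ v : V, G.Adj (u : V) v →
      v ∉ Subtype.val '' S' → ∃ hv : v ∈ C ∪ S, (⟨v, hv⟩ : ↥(C ∪ S)) ∈ E := by
    intro u hu v hadj hvS''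
    have hvCS : v ∈ C ∪ S := by
      by_cases hvs : v ∈ S
      · exact Or.inr hvs
      · exact Or.inl (hC.2.2.2 (u : V) (hEC u hu) v hadj hvs)
    have hvS' : (⟨v, hvCS⟩ : ↥(C ∪ S)) ∉ S' := fun h => hvS'' ((val_mem_image hvCS).mpr h)
    exact ⟨hvCS, hE.1.2.2.2 u hu ⟨v, hvCS⟩ (Or.inl hadj) hvS'⟩
  constructor
  · refine ⟨?_, ?_, ?_, ?_⟩
    · obtain ⟨e, he⟩ := hE.1.1
      exact ⟨(e : V), e, he, rfl⟩
    · rw [Set.disjoint_left]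
      rintro v ⟨e, he, rfl⟩ hmem
      have : e ∈ S' := by simpa using (val_mem_image e.2).mp hmem
      exact Set.disjoint_left.mp hE.1.2.1 he this
  -- connectivity
    · have hne : Nonempty ↥(Subtype.val '' E) := by
        obtain ⟨e, he⟩ := hE.1.1
        exact ⟨⟨(e : V), e, he, rfl⟩⟩
      refine SimpleGraph.Connected.mk ?_
      rintro a b
      obtain ⟨ea, hea, hva⟩ := a.2
      obtain ⟨eb, heb, hvb⟩ := b.2
      obtain ⟨w⟩ := hE.1.2.2.1.preconnected ⟨ea, hea⟩ ⟨eb, heb⟩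
      have hr := rtg_of_walk w
      have hr2 : Relation.ReflTransGen
          (fun p q : V => G.Adj p q ∧ p ∈ Subtype.val '' E ∧ q ∈ Subtype.val '' E)
          (ea : V) (eb : V) := by
        refine Relation.ReflTransGen.lift Subtype.val ?_ _ _ hr
        rintro p q ⟨hadj, hpE, hqE⟩
        refine ⟨?_, ⟨p, hpE, rfl⟩, ⟨q, hqE, rfl⟩⟩
        rcases hadj with h | ⟨hpS, _, _⟩
        · exact h
        · exact absurd hpS (hES p hpE)
      obtain ⟨hb', hreach⟩ := reach_of_rtg (Set.mem_image_of_mem _ hea) hr2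
      have ha2 : a = ⟨(ea : V), ⟨ea, hea, rfl⟩⟩ := Subtype.ext hva.symm
      have hb2 : b = ⟨(eb : V), hb'⟩ := Subtype.ext hvb.symm
      rw [ha2, hb2]
      exact hreach
    · rintro u ⟨e, he, rfl⟩ v hadj hvS''
      obtain ⟨hv, hvE⟩ := hmemCS e he v hadj hvS''
      exact ⟨⟨v, hv⟩, hvE, rfl⟩
  · ext v
    constructor
    · rintro ⟨hvnot, u, hu, hadj⟩
      obtain ⟨e, he, rfl⟩ := hu
      have hvCS : v ∈ C ∪ S := by
        by_cases hvs : v ∈ S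
        · exact Or.inr hvs
        · exact Or.inl (hC.2.2.2 (e : V) (hEC e he) v hadj hvs)
      have hvE : (⟨v, hvCS⟩ : ↥(C ∪ S)) ∉ E := fun h => hvnot ⟨⟨v, hvCS⟩, h, rfl⟩
      have : (⟨v, hvCS⟩ : ↥(C ∪ S)) ∈ nbhd (GCS G C S) E :=
        ⟨hvE, e, he, Or.inl hadj⟩
      rw [hE.2] at this
      exact ⟨⟨v, hvCS⟩, this, rfl⟩
    · rintro ⟨t, ht, rfl⟩
      rw [← hE.2] at ht
      obtain ⟨htE, e, heE, hadj⟩ := ht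
      refine ⟨?_, (e : V), ⟨e, heE, rfl⟩, ?_⟩
      · rintro ⟨e', he', hval⟩
        exact htE (Subtype.val_injective hval ▸ he')
      · rcases hadj with h | ⟨heS, _, _⟩
        · exact h
        · exact absurd heS (hES e heE)

/-- Let `S` be a minimal separator of `G` and `C` a component of `G − S`.
Then every minimal separator of `G(C, S)` is also a minimal separator of `G`. -/
theorem stmt9 {V : Type u} [Fintype V] (G : SimpleGraph V) (S C : Set V)
    (hS : IsMinSep G S) (hC : IsCompOf G S C)
    (S' : Set ↥(C ∪ S)) (hS' : IsMinSep (GCS G C S) S') :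
    IsMinSep G (Subtype.val '' S') := by
  obtain ⟨C₁, C₂, hC12, hF1, hF2⟩ := hS
  obtain ⟨D₁, D₂, hD12, hG1, hG2⟩ := hS'
  -- at most one of two distinct full components of GCS − S' meets S
  have honeS : ∀ {A B : Set ↥(C ∪ S)}, IsFullCompOf (GCS G C S) S' A →
      IsFullCompOf (GCS G C S) S' B → A ≠ B →
      (∃ a ∈ A, (a : V) ∈ S) → ∀ b ∈ B, (b : V) ∉ S := by
    rintro A B hA hB hAB ⟨a, haA, haS⟩ b hbB hbS
    have hab : a ≠ b := fun h => hAB (comp_eq_of_inter hA.1 hB.1 haA (h ▸ hbB))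
    have hadj : (GCS G C S).Adj a b := Or.inr ⟨haS, hbS, hab⟩
    have hbS' : b ∉ S' := Set.disjoint_left.mp hB.1.2.1 hbB
    have hbA : b ∈ A := hA.1.2.2.2 a haA b hadj hbS'
    exact hAB (comp_eq_of_inter hA.1 hB.1 hbA hbB)
  -- the main argument, with E₁ the full component avoiding S
  have main : ∀ E₁ E₂ : Set ↥(C ∪ S), IsFullCompOf (GCS G C S) S' E₁ →
      IsFullCompOf (GCS G C S) S' E₂ → E₁ ≠ E₂ → (∀ e ∈ E₁, (e : V) ∉ S) →
      IsMinSep G (Subtype.val '' S') := by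
    intro E₁ E₂ hE₁ hE₂ hne hE₁S
    have hAfull := lift_full hC hE₁ hE₁S
    by_cases h2 : ∀ e ∈ E₂, (e : V) ∉ S
    · -- both components avoid S: lift both
      have hBfull := lift_full hC hE₂ h2
      refine ⟨_, _, ?_, hAfull, hBfull⟩
      intro hAB
      obtain ⟨e, he⟩ := hE₁.1.1
      have : (e : V) ∈ Subtype.val '' E₂ := hAB ▸ ⟨e, he, rfl⟩
      obtain ⟨e', he', hval⟩ := this
      have : e ∈ E₂ := Subtype.val_injective hval ▸ he'
      exact hne (comp_eq_of_inter hE₁.1 hE₂.1 he this)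
    · push_neg at h2
      obtain ⟨s₀, hs₀E₂, hs₀S⟩ := h2
      -- get a full component D of G − S disjoint from C
      have hDex : ∃ D, IsFullCompOf G S D ∧ Disjoint D C := by
        by_cases hc : C₁ = C
        · refine ⟨C₂, hF2, Set.disjoint_left.mpr fun d hd hdc => ?_⟩
          exact hC12 (hc.trans (comp_eq_of_inter hF2.1 hC hd hdc).symm)
        · refine ⟨C₁, hF1, Set.disjoint_left.mpr fun d hd hdc => ?_⟩
          exact hc (comp_eq_of_inter hF1.1 hC hd hdc)
      obtain ⟨D, hDfull, hDC⟩ := hDex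
      have hDS : Disjoint D S := hDfull.1.2.1
      have hS''sub : Subtype.val '' S' ⊆ C ∪ S := by
        rintro v ⟨t, _, rfl⟩; exact t.2
      have hDS'' : ∀ d ∈ D, d ∉ Subtype.val '' S' := by
        intro d hd hmem
        rcases hS''sub hmem with h | h
        · exact Set.disjoint_left.mp hDC hd h
        · exact Set.disjoint_left.mp hDS hd h
      have hvalnotS'' : ∀ e ∈ E₂, (e : V) ∉ Subtype.val '' S' := by
        intro e he hmem
        have : e ∈ S' := by simpa using (val_mem_image e.2).mp hmem
        exact Set.disjoint_left.mp hE₂.1.2.1 he this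
      have hs₀S'' : (s₀ : V) ∉ Subtype.val '' S' := hvalnotS'' s₀ hs₀E₂
      set B := Wcomp G (Subtype.val '' S') (s₀ : V) with hBdef
      -- every vertex of S not in S'' is in B, once D ⊆ B; first D ⊆ B:
      have hs₀nbhdD : (s₀ : V) ∈ nbhd G D := hDfull.2 ▸ hs₀S
      obtain ⟨_, d₀, hd₀D, hd₀adj⟩ := hs₀nbhdD
      have hd₀B : d₀ ∈ B :=
        Wcomp_tail Wcomp_self ⟨hd₀adj.symm, hs₀S'', hDS'' d₀ hd₀D⟩
      have hDB : D ⊆ B := by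
        intro d hd
        obtain ⟨w⟩ := hDfull.1.2.2.1.preconnected ⟨d₀, hd₀D⟩ ⟨d, hd⟩
        have hr : Relation.ReflTransGen (fun a b => G.Adj a b ∧ a ∈ D ∧ b ∈ D) d₀ d :=
          rtg_of_walk w
        have hr2 : Relation.ReflTransGen (Off G (Subtype.val '' S')) d₀ d :=
          Relation.ReflTransGen.mono (fun a b hab => ⟨hab.1, hDS'' a hab.2.1, hDS'' b hab.2.2⟩) _ _ hr
        exact Relation.ReflTransGen.trans hd₀B hr2
      have hSB : ∀ s ∈ S, s ∉ Subtype.val '' S' → s ∈ B := by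
        intro s hsS hsS''
        have : s ∈ nbhd G D := hDfull.2 ▸ hsS
        obtain ⟨_, d, hdD, hdadj⟩ := this
        exact Wcomp_tail (hDB hdD) ⟨hdadj, hDS'' d hdD, hsS''⟩
      -- every vertex of E₂ is in B
      have hE₂B : ∀ e ∈ E₂, (e : V) ∈ B := by
        intro e he
        obtain ⟨w⟩ := hE₂.1.2.2.1.preconnected ⟨s₀, hs₀E₂⟩ ⟨e, he⟩
        have hr : Relation.ReflTransGen
            (fun a b : ↥(C ∪ S) => (GCS G C S).Adj a b ∧ a ∈ E₂ ∧ b ∈ E₂) s₀ e :=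
          rtg_of_walk w
        clear w he
        induction hr with
        | refl => exact Wcomp_self
        | @tail b c _ hbc ih =>
            rcases hbc.1 with g | ⟨_, hcS, _⟩
            · exact Wcomp_tail ih ⟨g, hvalnotS'' b hbc.2.1, hvalnotS'' c hbc.2.2⟩
            · exact hSB (c : V) hcS (hvalnotS'' c hbc.2.2)
      -- B is a full component of G − S''
      have hBcomp : IsCompOf G (Subtype.val '' S') B := Wcomp_isCompOf hs₀S''
      have hBnbhd : nbhd G B = Subtype.val '' S' := by
        refine Set.Subset.antisymm (Wcomp_nbhd_subset hs₀S'') ?_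
        rintro v ⟨t, htS', rfl⟩
        have ht : t ∈ nbhd (GCS G C S) E₂ := hE₂.2 ▸ htS'
        obtain ⟨htE, e, heE, hadj⟩ := ht
        refine ⟨fun h => Wcomp_not_mem hs₀S'' h ⟨t, htS', rfl⟩, ?_⟩
        rcases hadj with g | ⟨_, htS, _⟩
        · exact ⟨(e : V), hE₂B e heE, g⟩
        · have : (t : V) ∈ nbhd G D := hDfull.2 ▸ htS
          obtain ⟨_, d, hdD, hdadj⟩ := this
          exact ⟨d, hDB hdD, hdadj⟩
      refine ⟨_, B, ?_, hAfull, hBcomp, hBnbhd⟩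
      intro hAB
      have : (s₀ : V) ∈ Subtype.val '' E₁ := hAB ▸ Wcomp_self
      obtain ⟨e₁, he₁, hval⟩ := this
      exact hE₁S e₁ he₁ (hval ▸ hs₀S)
  by_cases h1 : ∀ e ∈ D₁, (e : V) ∉ S
  · exact main D₁ D₂ hG1 hG2 hD12 h1
  · push_neg at h1
    exact main D₂ D₁ hG2 hG1 hD12.symm (honeS hG1 hG2 hD12 h1)
end

section
/- Let S be a clique minimal separator of G and C a full component associated to S. Then every minimal separator of G other than S is a minimal separator of G[C ∪ S] or of G[V \ C]. -/
open SimpleGraph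

universe u

namespace ClqSepAux

variable {V : Type u} {G : SimpleGraph V}

lemma walk_reach_start {a b : V} (p : G.Walk a b) : ∀ y ∈ p.support, G.Reachable a y := by
  induction p with
  | nil =>
    intro y hy
    rw [SimpleGraph.Walk.support_nil, List.mem_singleton] at hy
    subst hy; exact Reachable.refl _
  | cons h q ih =>
    intro y hy
    rw [SimpleGraph.Walk.support_cons, List.mem_cons] at hy
    rcases hy with h1 | h2
    · subst h1; exact Reachable.refl _
    · exact h.reachable.trans (ih y h2)

lemma reachable_induce_of_walk {A : Set V} {a b : V} (p : G.Walk a b)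
    (hp : ∀ v ∈ p.support, v ∈ A) (ha : a ∈ A) (hb : b ∈ A) :
    (G.induce A).Reachable ⟨a, ha⟩ ⟨b, hb⟩ := by
  induction p with
  | nil => exact Reachable.refl _
  | @cons u c w h q ih =>
    have hc : c ∈ A := hp c (by simp [SimpleGraph.Walk.support_cons])
    have h1 : (G.induce A).Adj ⟨u, ha⟩ ⟨c, hc⟩ := h
    exact h1.reachable.trans (ih (fun v hv => hp v (by simp [SimpleGraph.Walk.support_cons, hv])) hc hb)

lemma exists_walk_of_induce_reachable {A : Set V} {x y : ↥A}
    (h : (G.induce A).Reachable x y) :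
    ∃ p : G.Walk x.1 y.1, ∀ v ∈ p.support, v ∈ A := by
  obtain ⟨q⟩ := h
  refine ⟨q.map (SimpleGraph.Embedding.induce A).toHom, ?_⟩
  intro v hv
  replace hv : v ∈ q.support.map (SimpleGraph.Embedding.induce (G := G) A).toHom := by
    rwa [← SimpleGraph.Walk.support_map]
  rw [List.mem_map] at hv
  obtain ⟨w, _, rfl⟩ := hv
  exact w.2

lemma exists_walk_in {A : Set V} (h : (G.induce A).Connected) {a b : V}
    (ha : a ∈ A) (hb : b ∈ A) :
    ∃ p : G.Walk a b, ∀ v ∈ p.support, v ∈ A :=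
  exists_walk_of_induce_reachable (h.preconnected ⟨a, ha⟩ ⟨b, hb⟩)

lemma walk_mem_of_closed {A P : Set V}
    (hcl : ∀ u ∈ P, ∀ v ∈ A, G.Adj u v → v ∈ P) :
    ∀ {a b : V} (p : G.Walk a b), (∀ v ∈ p.support, v ∈ A) → a ∈ P → b ∈ P := by
  intro a b p
  induction p with
  | nil => intro _ ha; exact ha
  | @cons u c w h q ih =>
    intro hp ha
    have hc : c ∈ A := hp c (by simp [SimpleGraph.Walk.support_cons])
    exact ih (fun v hv => hp v (by simp [SimpleGraph.Walk.support_cons, hv])) (hcl u ha c hc h)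

/-- If `X` and `Y` are components of `G − T` sharing a point, they are equal. -/
lemma comp_eq {T X Y : Set V} (hX : IsCompOf G T X) (hY : IsCompOf G T Y)
    {v : V} (hvX : v ∈ X) (hvY : v ∈ Y) : X = Y := by
  have key : ∀ (A B : Set V), IsCompOf G T A → IsCompOf G T B → v ∈ A → v ∈ B → A ⊆ B := by
    intro A B hA hB hvA hvB x hx
    obtain ⟨p, hp⟩ := exists_walk_in hA.2.2.1 hvA hx
    exact walk_mem_of_closed (fun u hu w hw hadj =>
      hB.2.2.2 u hu w hadj (fun hwT => (Set.disjoint_left.mp hA.2.1) hw hwT)) p hp hvB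
  exact Set.Subset.antisymm (key X Y hX hY hvX hvY) (key Y X hY hX hvY hvX)

/-- A component avoiding `S` that meets a component `C` of `G − S` is contained in it. -/
lemma comp_subset_of_meets {S T C X : Set V} (hC : IsCompOf G S C) (hX : IsCompOf G T X)
    (hXS : ∀ x ∈ X, x ∉ S) {v : V} (hvX : v ∈ X) (hvC : v ∈ C) : X ⊆ C := by
  intro x hx
  obtain ⟨p, hp⟩ := exists_walk_in hX.2.2.1 hvX hx
  exact walk_mem_of_closed (fun u hu w hw hadj =>
    hC.2.2.2 u hu w hadj (hXS w hw)) p hp hvC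

/-- Ambient-level description of a full component of `G[U] − T`. -/
def FC (G : SimpleGraph V) (U T A : Set V) : Prop :=
  A.Nonempty ∧ A ⊆ U ∧ (∀ a ∈ A, a ∉ T) ∧ (G.induce A).Connected ∧
    (∀ u ∈ A, ∀ v ∈ U, G.Adj u v → v ∉ T → v ∈ A) ∧
    (∀ t ∈ T, ∃ u ∈ A, G.Adj u t)

lemma FC_isFullCompOf {U T A : Set V} (h : FC G U T A) :
    IsFullCompOf (G.induce U) (Subtype.val ⁻¹' T) (Subtype.val ⁻¹' A) := by
  obtain ⟨hne, hAU, hAT, hconn, hcl, hfull⟩ := h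
  constructor
  · refine ⟨?_, ?_, ?_, ?_⟩
    · obtain ⟨a, ha⟩ := hne
      exact ⟨⟨a, hAU ha⟩, ha⟩
    · rw [Set.disjoint_left]
      intro x hx hxT
      exact hAT x.1 hx hxT
    · -- connectivity via iso with G.induce A
      have e : ((G.induce U).induce (Subtype.val ⁻¹' A)) ≃g (G.induce A) := by
        refine ⟨⟨fun x => ⟨x.1.1, x.2⟩, fun y => ⟨⟨y.1, hAU y.2⟩, y.2⟩, ?_, ?_⟩, ?_⟩
        · intro x; rfl
        · intro y; rfl
        · intro x y; rfl
      exact e.connected_iff.mpr hconn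
    · rintro u hu v hadj hvT
      exact hcl u.1 hu v.1 v.2 hadj hvT
  · ext v
    simp only [nbhd, Set.mem_setOf_eq, Set.mem_preimage]
    constructor
    · rintro ⟨hvA, u, huA, hadj⟩
      by_contra hvT
      exact hvA (hcl u.1 huA v.1 v.2 hadj hvT)
    · intro hvT
      obtain ⟨u, huA, hadj⟩ := hfull v.1 hvT
      exact ⟨fun hvA => hAT v.1 hvA hvT, ⟨u, hAU huA⟩, huA, hadj⟩


/-- Walk surgery through a clique boundary: any `G`-walk within `X` between
vertices of the region `P` can be replaced by one staying in `X ∩ P`. -/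
lemma surgery {S X P : Set V} (hclq : G.IsClique S)
    (hbd : ∀ x y, x ∈ P → y ∉ P → G.Adj x y → x ∈ S) :
    ∀ {a b : V} (p : G.Walk a b), (∀ v ∈ p.support, v ∈ X) →
    (∀ (ha : a ∈ X ∩ P) (hb : b ∈ X ∩ P), (G.induce (X ∩ P)).Reachable ⟨a, ha⟩ ⟨b, hb⟩) ∧
    (a ∉ P → ∀ (hb : b ∈ X ∩ P), ∃ d, ∃ hd : d ∈ X ∩ P, d ∈ S ∧
      (G.induce (X ∩ P)).Reachable ⟨d, hd⟩ ⟨b, hb⟩) := by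
  intro a b p
  induction p with
  | nil =>
    intro _
    refine ⟨fun ha hb => Reachable.refl _, fun haP hb => absurd hb.2 haP⟩
  | @cons u c w h q ih =>
    intro hsupp
    have hsupp' : ∀ v ∈ q.support, v ∈ X := fun v hv =>
      hsupp v (by simp [SimpleGraph.Walk.support_cons, hv])
    have hcX : c ∈ X := hsupp' c q.start_mem_support
    have huX : u ∈ X := hsupp u (by simp [SimpleGraph.Walk.support_cons])
    have IH := ih hsupp'
    constructor
    · intro ha hb
      by_cases hcP : c ∈ P
      · have hadj : (G.induce (X ∩ P)).Adj ⟨u, ha⟩ ⟨c, ⟨hcX, hcP⟩⟩ := h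
        exact hadj.reachable.trans (IH.1 ⟨hcX, hcP⟩ hb)
      · obtain ⟨d, hd, hdS, hreach⟩ := IH.2 hcP hb
        have huS : u ∈ S := hbd u c ha.2 hcP h
        by_cases hud : u = d
        · subst hud; exact hreach
        · have hadj : (G.induce (X ∩ P)).Adj ⟨u, ha⟩ ⟨d, hd⟩ := hclq huS hdS hud
          exact hadj.reachable.trans hreach
    · intro haP hb
      by_cases hcP : c ∈ P
      · exact ⟨c, ⟨hcX, hcP⟩, hbd c u hcP haP h.symm, IH.1 ⟨hcX, hcP⟩ hb⟩
      · exact IH.2 hcP hb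

/-- The connected component of a point within an induced subgraph, as a subset of `V`. -/
lemma comp_of_point (G : SimpleGraph V) {W : Set V} {v : V} (hv : v ∈ W) :
    ∃ D : Set V, v ∈ D ∧ D ⊆ W ∧ (G.induce D).Connected ∧
      (∀ u ∈ D, ∀ w ∈ W, G.Adj u w → w ∈ D) := by
  classical
  set D : Set V := Subtype.val '' {y : ↥W | (G.induce W).Reachable ⟨v, hv⟩ y} with hD
  have hvD : v ∈ D := ⟨⟨v, hv⟩, Reachable.refl _, rfl⟩
  have hDW : D ⊆ W := by rintro x ⟨y, _, rfl⟩; exact y.2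
  have hclose : ∀ u ∈ D, ∀ w ∈ W, G.Adj u w → w ∈ D := by
    rintro u ⟨y, hy, rfl⟩ w hw hadj
    have hadj' : (G.induce W).Adj y ⟨w, hw⟩ := hadj
    exact ⟨⟨w, hw⟩, hy.trans hadj'.reachable, rfl⟩
  refine ⟨D, hvD, hDW, ?_, hclose⟩
  rw [connected_iff]
  refine ⟨?_, ⟨⟨v, hvD⟩⟩⟩
  have base : ∀ x : ↥D, (G.induce D).Reachable ⟨v, hvD⟩ x := by
    rintro ⟨x, y, hy, rfl⟩
    obtain ⟨q⟩ := hy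
    have hpD : ∀ z ∈ (q.map (SimpleGraph.Embedding.induce W).toHom).support, z ∈ D := by
      intro z hz
      rw [SimpleGraph.Walk.support_map, List.mem_map] at hz
      obtain ⟨w, hw, rfl⟩ := hz
      exact ⟨w, walk_reach_start q w hw, rfl⟩
    exact reachable_induce_of_walk (q.map (SimpleGraph.Embedding.induce W).toHom)
      hpD hvD ⟨y, ⟨q⟩, rfl⟩
  intro x y'
  exact (base x).symm.trans (base y')


/-- Build an `IsMinSep` of an induced graph from two ambient-level full components. -/
lemma build {U T A₁ A₂ : Set V} (h1 : FC G U T A₁) (h2 : FC G U T A₂)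
    {x : V} (hx1 : x ∈ A₁) (hx2 : x ∉ A₂) :
    IsMinSep (G.induce U) (Subtype.val ⁻¹' T) := by
  refine ⟨Subtype.val ⁻¹' A₁, Subtype.val ⁻¹' A₂, ?_, FC_isFullCompOf h1, FC_isFullCompOf h2⟩
  intro he
  have hxU : x ∈ U := h1.2.1 hx1
  have : (⟨x, hxU⟩ : ↥U) ∈ Subtype.val ⁻¹' A₁ := hx1
  rw [he] at this
  exact hx2 this

lemma main {S C T X Y : Set V} (hclq : G.IsClique S) (hC : IsFullCompOf G S C)
    (hX : IsFullCompOf G T X) (hY : IsFullCompOf G T Y) (hXY : X ≠ Y)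
    (hYS : ∀ y ∈ Y, y ∉ S) (hTS : T ≠ S) :
    (T ⊆ C ∪ S ∧ IsMinSep (G.induce (C ∪ S)) (Subtype.val ⁻¹' T)) ∨
    (T ⊆ Cᶜ ∧ IsMinSep (G.induce Cᶜ) (Subtype.val ⁻¹' T)) := by
  classical
  have hCcl : ∀ u ∈ C, ∀ v, G.Adj u v → v ∉ S → v ∈ C := hC.1.2.2.2
  have hNC : nbhd G C = S := hC.2
  have hCS : ∀ s ∈ S, s ∉ C := by
    intro s hs hsC
    exact Set.disjoint_left.mp hC.1.2.1 hsC hs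
  have hbd1 : ∀ x y, x ∈ C ∪ S → y ∉ C ∪ S → G.Adj x y → x ∈ S := by
    intro x y hx hy hadj
    rcases hx with hx | hx
    · exact absurd (Or.inl (hCcl x hx y hadj (fun h => hy (Or.inr h)))) hy
    · exact hx
  have hbd2 : ∀ x y, x ∈ Cᶜ → y ∉ Cᶜ → G.Adj x y → x ∈ S := by
    intro x y hx hy hadj
    have hyC : y ∈ C := not_not.mp hy
    have : x ∈ nbhd G C := ⟨hx, y, hyC, hadj.symm⟩
    rwa [hNC] at this
  have hXT : ∀ x ∈ X, x ∉ T := fun x hx hxT => Set.disjoint_left.mp hX.1.2.1 hx hxT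
  have hYT : ∀ y ∈ Y, y ∉ T := fun y hy hyT => Set.disjoint_left.mp hY.1.2.1 hy hyT
  have hfullX : ∀ t ∈ T, t ∉ X ∧ ∃ u ∈ X, G.Adj u t := by
    intro t ht
    have : t ∈ nbhd G X := by rw [hX.2]; exact ht
    exact this
  have hfullY : ∀ t ∈ T, t ∉ Y ∧ ∃ u ∈ Y, G.Adj u t := by
    intro t ht
    have : t ∈ nbhd G Y := by rw [hY.2]; exact ht
    exact this
  have hXYdisj : ∀ v, v ∈ X → v ∉ Y := by
    intro v hvX hvY
    exact hXY (comp_eq hX.1 hY.1 hvX hvY)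
  obtain ⟨y₀, hy₀⟩ := hY.1.1
  -- the component-of-a-point construction used in the `T ⊊ S` cases
  have Dcase : ∀ s' ∈ S, s' ∉ T → (∀ t ∈ T, t ∈ S) →
      ∃ D : Set V, s' ∈ D ∧ FC G Cᶜ T D := by
    intro s' hs'S hs'T hTsubS
    have hs'W : s' ∈ {w | w ∉ C ∧ w ∉ T} := ⟨hCS s' hs'S, hs'T⟩
    obtain ⟨D, hs'D, hDW, hDconn, hDcl⟩ := comp_of_point G hs'W
    refine ⟨D, hs'D, ⟨s', hs'D⟩, fun d hd => (hDW hd).1, fun d hd => (hDW hd).2, hDconn,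
      ?_, ?_⟩
    · intro u hu v hv hadj hvT
      exact hDcl u hu v ⟨hv, hvT⟩ hadj
    · intro t ht
      refine ⟨s', hs'D, hclq hs'S (hTsubS t ht) ?_⟩
      intro he; exact hs'T (he ▸ ht)
  by_cases hYmeetsC : ∃ v, v ∈ Y ∧ v ∈ C
  · -- Case A : Y ⊆ C
    obtain ⟨v, hvY, hvC⟩ := hYmeetsC
    have hYC : Y ⊆ C := comp_subset_of_meets hC.1 hY.1 hYS hvY hvC
    have hTCS : T ⊆ C ∪ S := by
      intro t ht
      obtain ⟨-, u, huY, hadj⟩ := hfullY t ht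
      by_cases htS : t ∈ S
      · exact Or.inr htS
      · exact Or.inl (hCcl u (hYC huY) t hadj htS)
    have FCY : FC G (C ∪ S) T Y :=
      ⟨hY.1.1, fun y hy => Or.inl (hYC hy), hYT, hY.1.2.2.1,
        fun u hu v _ hadj hvT => hY.1.2.2.2 u hu v hadj hvT,
        fun t ht => (hfullY t ht).2⟩
    by_cases hXmS : ∃ s₀, s₀ ∈ X ∧ s₀ ∈ S
    · -- second component: X ∩ (C ∪ S)
      obtain ⟨s₀, hs₀X, hs₀S⟩ := hXmS
      have FCX : FC G (C ∪ S) T (X ∩ (C ∪ S)) := by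
        refine ⟨⟨s₀, hs₀X, Or.inr hs₀S⟩, fun a ha => ha.2, fun a ha => hXT a ha.1, ?_, ?_, ?_⟩
        · rw [connected_iff]
          refine ⟨?_, ⟨⟨s₀, hs₀X, Or.inr hs₀S⟩⟩⟩
          intro a b
          obtain ⟨p, hp⟩ := exists_walk_in hX.1.2.2.1 a.2.1 b.2.1
          exact (surgery hclq hbd1 p hp).1 a.2 b.2
        · intro u hu v hv hadj hvT
          exact ⟨hX.1.2.2.2 u hu.1 v hadj hvT, hv⟩
        · intro t ht
          obtain ⟨-, x, hxX, hadj⟩ := hfullX t ht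
          by_cases hxCS : x ∈ C ∪ S
          · exact ⟨x, ⟨hxX, hxCS⟩, hadj⟩
          · have htS : t ∈ S := hbd1 t x (hTCS ht) hxCS hadj.symm
            refine ⟨s₀, ⟨hs₀X, Or.inr hs₀S⟩, hclq hs₀S htS ?_⟩
            intro he; exact hXT s₀ hs₀X (he ▸ ht)
      exact Or.inl ⟨hTCS, build FCY FCX hy₀ (fun h => hXYdisj y₀ h.1 hy₀)⟩
    · have hXS' : ∀ x ∈ X, x ∉ S := by
        intro x hx hxS; exact hXmS ⟨x, hx, hxS⟩
      by_cases hXmeetsC : ∃ v, v ∈ X ∧ v ∈ C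
      · obtain ⟨w, hwX, hwC⟩ := hXmeetsC
        have hXC : X ⊆ C := comp_subset_of_meets hC.1 hX.1 hXS' hwX hwC
        have FCX : FC G (C ∪ S) T X :=
          ⟨hX.1.1, fun x hx => Or.inl (hXC hx), hXT, hX.1.2.2.1,
            fun u hu v _ hadj hvT => hX.1.2.2.2 u hu v hadj hvT,
            fun t ht => (hfullX t ht).2⟩
        exact Or.inl ⟨hTCS, build FCY FCX hy₀ (hXYdisj y₀ · hy₀)⟩
      · -- X avoids C ∪ S entirely; then T ⊊ S
        have hXC' : ∀ x ∈ X, x ∉ C := fun x hx hxC => hXmeetsC ⟨x, hx, hxC⟩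
        have hTsubS : ∀ t ∈ T, t ∈ S := by
          intro t ht
          obtain ⟨-, x, hxX, hadj⟩ := hfullX t ht
          rcases hTCS ht with htC | htS
          · exact absurd (hCcl t htC x hadj.symm (hXS' x hxX)) (hXC' x hxX)
          · exact htS
        have hTneS : ∃ s', s' ∈ S ∧ s' ∉ T := by
          by_contra hcon
          push_neg at hcon
          exact hTS (Set.Subset.antisymm hTsubS hcon)
        obtain ⟨s', hs'S, hs'T⟩ := hTneS
        obtain ⟨D, hs'D, FCD⟩ := Dcase s' hs'S hs'T hTsubS
        have FCX : FC G Cᶜ T X :=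
          ⟨hX.1.1, fun x hx => hXC' x hx, hXT, hX.1.2.2.1,
            fun u hu v _ hadj hvT => hX.1.2.2.2 u hu v hadj hvT,
            fun t ht => (hfullX t ht).2⟩
        have hTCc : T ⊆ Cᶜ := fun t ht => hCS t (hTsubS t ht)
        exact Or.inr ⟨hTCc, build FCD FCX hs'D (fun h => hXS' s' h hs'S)⟩
  · -- Case B : Y avoids C
    have hYC' : ∀ y ∈ Y, y ∉ C := fun y hy hyC => hYmeetsC ⟨y, hy, hyC⟩
    have hTCc : T ⊆ Cᶜ := by
      intro t ht htC
      obtain ⟨-, u, huY, hadj⟩ := hfullY t ht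
      exact hYC' u huY (hCcl t htC u hadj.symm (hYS u huY))
    have FCY : FC G Cᶜ T Y :=
      ⟨hY.1.1, fun y hy => hYC' y hy, hYT, hY.1.2.2.1,
        fun u hu v _ hadj hvT => hY.1.2.2.2 u hu v hadj hvT,
        fun t ht => (hfullY t ht).2⟩
    by_cases hXmS : ∃ s₀, s₀ ∈ X ∧ s₀ ∈ S
    · obtain ⟨s₀, hs₀X, hs₀S⟩ := hXmS
      have FCX : FC G Cᶜ T (X ∩ Cᶜ) := by
        refine ⟨⟨s₀, hs₀X, hCS s₀ hs₀S⟩, fun a ha => ha.2, fun a ha => hXT a ha.1, ?_, ?_, ?_⟩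
        · rw [connected_iff]
          refine ⟨?_, ⟨⟨s₀, hs₀X, hCS s₀ hs₀S⟩⟩⟩
          intro a b
          obtain ⟨p, hp⟩ := exists_walk_in hX.1.2.2.1 a.2.1 b.2.1
          exact (surgery hclq hbd2 p hp).1 a.2 b.2
        · intro u hu v hv hadj hvT
          exact ⟨hX.1.2.2.2 u hu.1 v hadj hvT, hv⟩
        · intro t ht
          obtain ⟨-, x, hxX, hadj⟩ := hfullX t ht
          by_cases hxCc : x ∈ Cᶜ
          · exact ⟨x, ⟨hxX, hxCc⟩, hadj⟩
          · have htS : t ∈ S := hbd2 t x (hTCc ht) hxCc hadj.symm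
            refine ⟨s₀, ⟨hs₀X, hCS s₀ hs₀S⟩, hclq hs₀S htS ?_⟩
            intro he; exact hXT s₀ hs₀X (he ▸ ht)
      exact Or.inr ⟨hTCc, build FCY FCX hy₀ (fun h => hXYdisj y₀ h.1 hy₀)⟩
    · have hXS' : ∀ x ∈ X, x ∉ S := by
        intro x hx hxS; exact hXmS ⟨x, hx, hxS⟩
      by_cases hXmeetsC : ∃ v, v ∈ X ∧ v ∈ C
      · -- X ⊆ C ; then T ⊊ S
        obtain ⟨w, hwX, hwC⟩ := hXmeetsC
        have hXC : X ⊆ C := comp_subset_of_meets hC.1 hX.1 hXS' hwX hwC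
        have hTsubS : ∀ t ∈ T, t ∈ S := by
          intro t ht
          obtain ⟨-, x, hxX, hadj⟩ := hfullX t ht
          have : t ∈ nbhd G C := ⟨hTCc ht, x, hXC hxX, hadj⟩
          rwa [hNC] at this
        have hTneS : ∃ s', s' ∈ S ∧ s' ∉ T := by
          by_contra hcon
          push_neg at hcon
          exact hTS (Set.Subset.antisymm hTsubS hcon)
        obtain ⟨s', hs'S, hs'T⟩ := hTneS
        obtain ⟨D, hs'D, FCD⟩ := Dcase s' hs'S hs'T hTsubS
        exact Or.inr ⟨hTCc, build FCD FCY hs'D (fun h => hYS s' h hs'S)⟩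
      · have hXC' : ∀ x ∈ X, x ∉ C := fun x hx hxC => hXmeetsC ⟨x, hx, hxC⟩
        have FCX : FC G Cᶜ T X :=
          ⟨hX.1.1, fun x hx => hXC' x hx, hXT, hX.1.2.2.1,
            fun u hu v _ hadj hvT => hX.1.2.2.2 u hu v hadj hvT,
            fun t ht => (hfullX t ht).2⟩
        exact Or.inr ⟨hTCc, build FCY FCX hy₀ (hXYdisj y₀ · hy₀)⟩

end ClqSepAux

/-- Let `S` be a clique minimal separator of `G` and `C` a full component associated
to `S`. Then every minimal separator of `G` other than `S` is a minimal separator of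
`G[C ∪ S]` or of `G[V \ C]`. -/
theorem stmt10 {V : Type u} [Fintype V] (G : SimpleGraph V) (S C : Set V)
    (hS : IsMinSep G S) (hclique : G.IsClique S) (hC : IsFullCompOf G S C)
    (T : Set V) (hT : IsMinSep G T) (hTS : T ≠ S) :
    (T ⊆ C ∪ S ∧ IsMinSep (G.induce (C ∪ S)) (Subtype.val ⁻¹' T)) ∨
    (T ⊆ Cᶜ ∧ IsMinSep (G.induce Cᶜ) (Subtype.val ⁻¹' T)) := by
    classical
  obtain ⟨C₁, C₂, hne, h1, h2⟩ := hT
  -- at most one of `C₁`, `C₂` meets `S`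
  have oneside : ∀ (A B : Set V), IsFullCompOf G T A → IsFullCompOf G T B → A ≠ B →
      (∃ s, s ∈ A ∧ s ∈ S) → ∀ y ∈ B, y ∉ S := by
    intro A B hA hB hAB ⟨s₁, hs₁A, hs₁S⟩ y hyB hyS
    have hdisj : ∀ v, v ∈ A → v ∉ B := fun v hvA hvB =>
      hAB (ClqSepAux.comp_eq hA.1 hB.1 hvA hvB)
    have hne' : s₁ ≠ y := fun he => hdisj s₁ hs₁A (he ▸ hyB)
    have hadj : G.Adj s₁ y := hclique hs₁S hyS hne'
    have : y ∈ nbhd G A := ⟨fun h => hdisj y h hyB, s₁, hs₁A, hadj⟩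
    rw [hA.2] at this
    exact Set.disjoint_left.mp hB.1.2.1 hyB this
  by_cases h : ∀ y ∈ C₂, y ∉ S
  · exact ClqSepAux.main hclique hC h1 h2 hne h hTS
  · push_neg at h
    obtain ⟨s₂, hs₂C₂, hs₂S⟩ := h
    have h' : ∀ y ∈ C₁, y ∉ S := oneside C₂ C₁ h2 h1 hne.symm ⟨s₂, hs₂C₂, hs₂S⟩
    exact ClqSepAux.main hclique hC h2 h1 hne.symm h' hTS
end

section
/- Let G be a graph with a tree decomposition in which a bag B equals a minimal separator S of G, and for each component C_i of G − S let T_i be a tree decomposition of G(C_i, S) (the graph G[C_i ∪ S] with S completed into a clique) of width at most w, where |S| ≤ w + 1. Then connecting, for each i, a bag of T_i containing S to the new bag B = S yields a tree decomposition of G of width at most w. -/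
open SimpleGraph

universe u

/-- A tree decomposition of `G`: a tree `T` with a bag `X_t ⊆ V` for each node `t`
such that every vertex lies in some bag, every edge is contained in some bag, and
for each vertex `v` the nodes whose bag contains `v` form a subtree of `T`
(phrased via: every path between two nodes whose bags contain `v` stays in bags
containing `v`). -/
structure TreeDecomp {V : Type u} (G : SimpleGraph V) : Type (u + 1) where
  ι : Type u
  T : SimpleGraph ι
  tree : T.IsTree
  bag : ι → Set V
  cover_vertex : ∀ v : V, ∃ t, v ∈ bag t
  cover_edge : ∀ u v : V, G.Adj u v → ∃ t, u ∈ bag t ∧ v ∈ bag t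
  bag_connected : ∀ (v : V) (t₁ t₂ : ι), v ∈ bag t₁ → v ∈ bag t₂ →
    ∀ (p : T.Walk t₁ t₂), p.IsPath → ∀ t ∈ p.support, v ∈ bag t

section Glue

variable {K : Type u} {F : K → Type u}

/-- glue trees at roots with a new node `none`. -/
def glue (TT : ∀ k, SimpleGraph (F k)) (rt : ∀ k, F k) :
    SimpleGraph (Option (Σ k, F k)) where
  Adj x y := (x = none ∧ ∃ k, y = some ⟨k, rt k⟩) ∨ (y = none ∧ ∃ k, x = some ⟨k, rt k⟩) ∨
    (∃ (k : K) (s s' : F k), (TT k).Adj s s' ∧ x = some ⟨k, s⟩ ∧ y = some ⟨k, s'⟩)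
  symm := by
    constructor
    rintro x y (⟨rfl, k, rfl⟩ | ⟨rfl, k, rfl⟩ | ⟨k, s, s', hA, rfl, rfl⟩)
    · exact Or.inr (Or.inl ⟨rfl, k, rfl⟩)
    · exact Or.inl ⟨rfl, k, rfl⟩
    · exact Or.inr (Or.inr ⟨k, s', s, hA.symm, rfl, rfl⟩)
  loopless := by
    constructor
    rintro x (⟨rfl, k, h⟩ | ⟨rfl, k, h⟩ | ⟨k, s, s', hA, rfl, he⟩)
    · exact nomatch h
    · exact nomatch h
    · simp only [Option.some.injEq] at he
      exact hA.ne (eq_of_heq (Sigma.mk.inj_iff.mp he).2)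

variable {TT : ∀ k, SimpleGraph (F k)} {rt : ∀ k, F k}

lemma glue_adj {x y} : (glue TT rt).Adj x y ↔
    (x = none ∧ ∃ k, y = some ⟨k, rt k⟩) ∨ (y = none ∧ ∃ k, x = some ⟨k, rt k⟩) ∨
    (∃ (k : K) (s s' : F k), (TT k).Adj s s' ∧ x = some ⟨k, s⟩ ∧ y = some ⟨k, s'⟩) := Iff.rfl

/-- the embedding of the `k`-th tree. -/
def homc (TT : ∀ k, SimpleGraph (F k)) (rt : ∀ k, F k) (k : K) :
    TT k →g glue TT rt where
  toFun s := some ⟨k, s⟩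
  map_rel' := fun hA => Or.inr (Or.inr ⟨k, _, _, hA, rfl, rfl⟩)

lemma homc_inj (k : K) : Function.Injective (homc TT rt k) := by
  intro a b h
  have h2 : (⟨k, a⟩ : Σ k, F k) = ⟨k, b⟩ := Option.some.inj h
  exact eq_of_heq (Sigma.mk.inj_iff.mp h2).2

lemma glue_proj (k : K) {x y : Option (Σ k, F k)} (W : (glue TT rt).Walk x y) :
    Option.none ∉ W.support → ∀ t, x = some ⟨k, t⟩ →
    ∃ t', y = some ⟨k, t'⟩ ∧ ∃ w : (TT k).Walk t t',
      W.support = w.support.map (fun s => some ⟨k, s⟩) ∧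
      W.edges = w.edges.map (Sym2.map (fun s => some ⟨k, s⟩)) := by
  induction W with
  | nil =>
    intro _ t hx
    subst hx
    exact ⟨t, rfl, Walk.nil, by simp, by simp⟩
  | @cons u v z h W' ih =>
    intro hW t hx
    subst hx
    have hvs : v ≠ none := by
      intro hv
      apply hW
      rw [Walk.support_cons]
      exact List.mem_cons_of_mem _ (hv ▸ W'.start_mem_support)
    rcases h with ⟨h1, _⟩ | ⟨h1, _⟩ | ⟨k₂, s, s', hA, he1, he2⟩
    · exact nomatch h1
    · exact absurd h1 hvs
    · simp only [Option.some.injEq] at he1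
      obtain ⟨rfl, hts⟩ := Sigma.mk.inj_iff.mp he1
      have : t = s := eq_of_heq hts
      subst this
      have hW' : Option.none ∉ W'.support := fun hmem => hW (List.mem_cons_of_mem _ hmem)
      obtain ⟨t', hy, w, hsup, hedg⟩ := ih hW' s' he2
      subst he2
      refine ⟨t', hy, Walk.cons hA w, ?_, ?_⟩
      · exact congrArg (List.cons (some ⟨k, t⟩ : Option (Σ k, F k))) hsup
      · exact congrArg (List.cons s((some ⟨k, t⟩ : Option (Σ k, F k)), some ⟨k, s'⟩)) hedg

lemma glue_reach (hconn : ∀ k, (TT k).Connected) (x : Option (Σ k, F k)) :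
    (glue TT rt).Reachable none x := by
  match x with
  | none => exact Reachable.refl _
  | some ⟨k, t⟩ =>
    have h1 : (glue TT rt).Reachable (some ⟨k, rt k⟩) (some ⟨k, t⟩) :=
      Reachable.map (homc TT rt k) ((hconn k).preconnected (rt k) t)
    exact (Adj.reachable (Or.inl ⟨rfl, k, rfl⟩)).trans h1

lemma glue_isTree (htree : ∀ k, (TT k).IsTree) : (glue TT rt).IsTree := by
  constructor
  · haveI : Nonempty (Option (Σ k, F k)) := ⟨none⟩
    exact Connected.mk (fun x y => ((glue_reach (fun k => (htree k).isConnected) x).symm.trans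
      (glue_reach (fun k => (htree k).isConnected) y)))
  · intro x W hW
    classical
    by_cases hnone : (none : Option (Σ k, F k)) ∈ W.support
    · -- rotate to none
      have hQ : (W.rotate _ hnone).IsCycle := hW.rotate hnone
      generalize W.rotate _ hnone = Q at hQ
      clear hW hnone
      cases Q with
      | nil => exact hQ.ne_nil rfl
      | cons h₁ Q' =>
        rename_i y
        have hk : ∃ k, y = some ⟨k, rt k⟩ := by
          rcases h₁ with ⟨_, k, hy⟩ | ⟨_, k, hy⟩ | ⟨k, s, s', _, he1, _⟩
          · exact ⟨k, hy⟩
          · exact nomatch hy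
          · exact nomatch he1
        obtain ⟨k, rfl⟩ := hk
        have hlen : 2 ≤ Q'.length := by
          have := hQ.three_le_length
          simp only [Walk.length_cons] at this
          omega
        have hnodup : Q'.support.Nodup := by
          have := hQ.support_nodup
          simpa [Walk.support_cons] using this
        obtain ⟨y', h₂, R, hRe⟩ := Walk.exists_eq_cons_of_ne
          (by simp : (none : Option (Σ k, F k)) ≠ some ⟨k, rt k⟩) Q'.reverse
        have hQrs : Q'.reverse.support = none :: R.support := by
          rw [hRe, Walk.support_cons]
        have hRnodup : R.support.Nodup ∧ (none : Option (Σ k, F k)) ∉ R.support := by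
          have : Q'.reverse.support.Nodup := by
            rw [Walk.support_reverse]; exact List.nodup_reverse.mpr hnodup
          rw [hQrs] at this
          exact ⟨this.of_cons, (List.nodup_cons.mp this).1⟩
        have hk' : ∃ k', y' = some ⟨k', rt k'⟩ := by
          rcases h₂ with ⟨_, k', hy⟩ | ⟨_, k', hy⟩ | ⟨k', s, s', _, he1, _⟩
          · exact ⟨k', hy⟩
          · exact nomatch hy
          · exact nomatch he1
        obtain ⟨k', rfl⟩ := hk'
        obtain ⟨t', hy, -⟩ := glue_proj k' R hRnodup.2 (rt k') rfl
        simp only [Option.some.injEq] at hy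
        obtain ⟨rfl, -⟩ := Sigma.mk.inj_iff.mp hy
        -- now R : Walk (some ⟨k, rt k⟩) (some ⟨k, rt k⟩)... derive contradiction
        have hRlen : 1 ≤ R.length := by
          have : Q'.reverse.length = R.length + 1 := by rw [hRe, Walk.length_cons]
          rw [Walk.length_reverse] at this
          omega
        cases R with
        | nil => simp at hRlen
        | cons h₃ R₂ =>
          have hmem : (some ⟨k, rt k⟩ : Option (Σ k, F k)) ∈ R₂.support :=
            R₂.end_mem_support
          have := hRnodup.1
          rw [Walk.support_cons, List.nodup_cons] at this
          exact this.1 hmem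
    · -- cycle avoiding none: project
      have hx : ∃ k t, x = some ⟨k, t⟩ := by
        match x with
        | none => exact absurd W.start_mem_support hnone
        | some ⟨k, t⟩ => exact ⟨k, t, rfl⟩
      obtain ⟨k, t, rfl⟩ := hx
      obtain ⟨t', hy, w, hsup, hedg⟩ := glue_proj k W hnone t rfl
      simp only [Option.some.injEq] at hy
      obtain ⟨-, htt⟩ := Sigma.mk.inj_iff.mp hy
      have : t = t' := eq_of_heq htt
      subst this
      refine (htree k).IsAcyclic w ⟨⟨⟨?_⟩, ?_⟩, ?_⟩
      · have := hW.isCircuit.isTrail.edges_nodup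
        rw [hedg] at this
        exact this.of_map _
      · intro hnil
        have h3 := hW.three_le_length
        have hss : W.support.length = w.support.length := by rw [hsup, List.length_map]
        rw [Walk.length_support, Walk.length_support] at hss
        have : w.length = 0 := by rw [hnil]; rfl
        omega
      · have := hW.support_nodup
        rw [hsup, ← List.map_tail] at this
        exact this.of_map _

end Glue

section Comp

variable {V : Type u} (G : SimpleGraph V) (S : Set V)

/-- `G - S` -/
def delS : SimpleGraph V where
  Adj u v := G.Adj u v ∧ u ∉ S ∧ v ∉ S
  symm := ⟨fun _ _ ⟨h, h1, h2⟩ => ⟨h.symm, h2, h1⟩⟩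
  loopless := ⟨fun _ ⟨h, _, _⟩ => G.irrefl h⟩

variable {G S}

lemma delS_walk_not_S {a b : V} (w : (delS G S).Walk a b) (ha : a ∉ S) : b ∉ S := by
  induction w with
  | nil => exact ha
  | cons h _ ih => exact ih h.2.2

/-- the component of `v` in `G - S` -/
def comp (G : SimpleGraph V) (S : Set V) (v : V) : Set V := {u | (delS G S).Reachable v u}

lemma mem_comp_self (v : V) : v ∈ comp G S v := Reachable.refl v

lemma comp_not_S {v u : V} (hv : v ∉ S) (hu : u ∈ comp G S v) : u ∉ S := by
  obtain ⟨w⟩ := hu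
  exact delS_walk_not_S w hv

lemma comp_isCompOf {v : V} (hv : v ∉ S) : IsCompOf G S (comp G S v) := by
  refine ⟨⟨v, mem_comp_self v⟩, Set.disjoint_left.mpr (fun u hu => comp_not_S hv hu), ?_, ?_⟩
  · have key : ∀ (a b : V) (w : (delS G S).Walk a b) (ha : a ∈ comp G S v),
        ∃ hb : b ∈ comp G S v,
          (G.induce (comp G S v)).Reachable ⟨a, ha⟩ ⟨b, hb⟩ := by
      intro a b w
      induction w with
      | nil => exact fun ha => ⟨ha, Reachable.refl _⟩
      | @cons a c b h w' ih =>
        intro ha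
        have hc : c ∈ comp G S v := ha.trans h.reachable
        obtain ⟨hb, hr⟩ := ih hc
        refine ⟨hb, Reachable.trans ?_ hr⟩
        exact Adj.reachable (by exact h.1)
    haveI : Nonempty ↥(comp G S v) := ⟨⟨v, mem_comp_self v⟩⟩
    refine Connected.mk ?_
    · rintro ⟨a, ha⟩ ⟨b, hb⟩
      obtain ⟨wa⟩ := ha
      obtain ⟨wb⟩ := hb
      obtain ⟨ha', ra⟩ := key v a wa (mem_comp_self v)
      obtain ⟨hb', rb⟩ := key v b wb (mem_comp_self v)
      exact ra.symm.trans rb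
  · intro u hu x hadj hx
    exact hu.trans (Adj.reachable ⟨hadj, comp_not_S hv hu, hx⟩)

lemma isCompOf_subset {C C' : Set V} (hC : IsCompOf G S C) (hC' : IsCompOf G S C')
    {z : V} (hz : z ∈ C) (hz' : z ∈ C') : C ⊆ C' := by
  have key : ∀ (a b : ↥C) (w : (G.induce C).Walk a b), (a : V) ∈ C' → (b : V) ∈ C' := by
    intro a b w
    induction w with
    | nil => exact id
    | @cons a c b h w' ih =>
      intro ha
      have hadj : G.Adj (a : V) (c : V) := h
      have hcS : (c : V) ∉ S := Set.disjoint_left.mp hC.2.1 c.2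
      exact ih (hC'.2.2.2 a ha c hadj hcS)
  intro u hu
  obtain ⟨w⟩ := hC.2.2.1.preconnected ⟨z, hz⟩ ⟨u, hu⟩
  exact key _ _ w hz'

lemma isCompOf_eq {C C' : Set V} (hC : IsCompOf G S C) (hC' : IsCompOf G S C')
    {z : V} (hz : z ∈ C) (hz' : z ∈ C') : C = C' :=
  Set.Subset.antisymm (isCompOf_subset hC hC' hz hz') (isCompOf_subset hC' hC hz' hz)

end Comp

namespace TreeDecomp


variable {V : Type u} {H : SimpleGraph V} (td : TreeDecomp H)

lemma step (v : V) (K : Set V)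
    (hs : ∀ u ∈ K, ∃ s, u ∈ td.bag s ∧ v ∈ td.bag s) {t₁ t₂ : td.ι}
    (p : td.T.Walk t₁ t₂) :
    p.IsPath → v ∈ td.bag t₂ → (∀ u ∈ K, u ∈ td.bag t₁) →
    ∃ t, v ∈ td.bag t ∧ ∀ u ∈ K, u ∈ td.bag t := by
  classical
  induction p with
  | nil => exact fun _ hv hK => ⟨_, hv, hK⟩
  | @cons t₁ t₁' t₂ h p' ih =>
    intro hp hv2 hK
    by_cases hv1 : v ∈ td.bag t₁
    · exact ⟨t₁, hv1, hK⟩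
    have hK' : ∀ u ∈ K, u ∈ td.bag t₁' := by
      intro u hu
      obtain ⟨su, hus, hvs⟩ := hs u hu
      -- get a path from su to t₁
      obtain ⟨w⟩ := td.tree.isConnected.preconnected su t₁
      set P : td.T.Walk su t₁ := w.toPath.val with hPdef
      have hP : P.IsPath := w.toPath.prop
      have hallP : ∀ x ∈ P.support, u ∈ td.bag x :=
        td.bag_connected u su t₁ hus (hK u hu) P hP
      by_cases hmem : t₁' ∈ P.support
      · exact hallP t₁' hmem
      · exfalso
        have hdisj : ∀ x ∈ P.support, x ∉ p'.support := by
          intro s hsP hsp'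
          -- uniqueness of path from s to t₁
          have hA : (P.dropUntil s hsP).IsPath := hP.dropUntil hsP
          have ht1np' : t₁ ∉ p'.support := ((Walk.cons_isPath_iff h p').mp hp).2
          have hB : (Walk.cons h (p'.takeUntil s hsp')).IsPath := by
            rw [Walk.cons_isPath_iff]
            exact ⟨hp.of_cons.takeUntil hsp',
              fun hmem' => ht1np' (Walk.support_takeUntil_subset _ hsp' hmem')⟩
          have hAB : P.dropUntil s hsP = (Walk.cons h (p'.takeUntil s hsp')).reverse := by
            obtain ⟨q, _, huniq⟩ := td.tree.existsUnique_path s t₁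
            exact (huniq _ hA).trans (huniq _ hB.reverse).symm
          have ht1'B : t₁' ∈ (P.dropUntil s hsP).support := by
            rw [hAB, Walk.support_reverse, List.mem_reverse, Walk.support_cons]
            exact List.mem_cons_of_mem _ (Walk.start_mem_support _)
          exact hmem (Walk.support_dropUntil_subset P hsP ht1'B)
        have hWpath : (P.append (Walk.cons h p')).IsPath := by
          rw [Walk.isPath_def, Walk.support_append, Walk.support_cons, List.tail_cons]
          exact List.Nodup.append hP.support_nodup hp.of_cons.support_nodup hdisj
        have := td.bag_connected v su t₂ hvs hv2 _ hWpath t₁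
          (by rw [Walk.mem_support_append_iff]; exact Or.inl P.end_mem_support)
        exact hv1 this
    exact ih hp.of_cons hv2 hK'

lemma clique_bag (hne : Nonempty td.ι) (K : Set V) (hfin : K.Finite)
    (hcl : K.Pairwise H.Adj) : ∃ t, ∀ v ∈ K, v ∈ td.bag t := by
  classical
  refine Set.Finite.induction_on (motive := fun K _ => K.Pairwise H.Adj → ∃ t, ∀ v ∈ K, v ∈ td.bag t)
    K hfin (fun _ => ⟨Classical.choice hne, by simp⟩) ?_ hcl
  intro v K' hvK' hfin' ih hcl'
  obtain ⟨t₁, ht₁⟩ := ih (hcl'.mono (Set.subset_insert v K'))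
  obtain ⟨t₂, ht₂⟩ := td.cover_vertex v
  obtain ⟨wp⟩ := td.tree.isConnected.preconnected t₁ t₂
  have hs : ∀ u ∈ K', ∃ s, u ∈ td.bag s ∧ v ∈ td.bag s := by
    intro u hu
    have hadj : H.Adj u v := hcl' (Set.mem_insert_iff.mpr (Or.inr hu))
      (Set.mem_insert v K') (fun h => hvK' (h ▸ hu))
    obtain ⟨s, h1, h2⟩ := td.cover_edge u v hadj
    exact ⟨s, h1, h2⟩
  obtain ⟨t, htv, htK⟩ := td.step v K' hs wp.toPath.val wp.toPath.prop ht₂ ht₁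
  exact ⟨t, fun x hx => (Set.mem_insert_iff.mp hx).elim (fun h => h ▸ htv) (htK x)⟩

end TreeDecomp

/-- Let `S` be a minimal separator of `G` with `|S| ≤ w + 1`, and suppose that for
each component `C` of `G − S` the graph `G(C, S)` (i.e. `G[C ∪ S]` with `S` completed
into a clique) has a tree decomposition of width at most `w`. Then (gluing a bag of
each such decomposition containing `S` to a new bag `B = S`) `G` has a tree
decomposition of width at most `w`. -/
theorem stmt19 {V : Type u} [Fintype V] (G : SimpleGraph V) (S : Set V) (w : ℕ)
    (hS : IsMinSep G S) (hSsize : S.ncard ≤ w + 1)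
    (htd : ∀ C : Set V, IsCompOf G S C →
      ∃ td : TreeDecomp (GCS G C S), ∀ t, (td.bag t).ncard ≤ w + 1) :
    ∃ td : TreeDecomp G, ∀ t, (td.bag t).ncard ≤ w + 1 := by
  classical
  have h0 := fun c : {C : Set V // IsCompOf G S C} => htd c.1 c.2
  choose td hw using h0
  -- Comp notation
  set Comp := {C : Set V // IsCompOf G S C} with hComp
  have hne : ∀ c : Comp, Nonempty (td c).ι := by
    intro c
    obtain ⟨v₀, hv₀⟩ := c.2.1
    obtain ⟨t, -⟩ := (td c).cover_vertex ⟨v₀, Or.inl hv₀⟩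
    exact ⟨t⟩
  have hrc : ∀ c : Comp, ∃ t, ∀ x : ↥(c.1 ∪ S), (x : V) ∈ S → x ∈ (td c).bag t := by
    intro c
    obtain ⟨t, ht⟩ := TreeDecomp.clique_bag (td c) (hne c) {x : ↥(c.1 ∪ S) | (x : V) ∈ S}
      (Set.toFinite _) (fun x hx y hy hxy => Or.inr ⟨hx, hy, hxy⟩)
    exact ⟨t, fun x hx => ht x hx⟩
  choose r hr using hrc
  set F : Comp → Type u := fun c => (td c).ι with hF
  set TT : ∀ c : Comp, SimpleGraph (F c) := fun c => (td c).T with hTT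
  have htree : (glue TT r).IsTree := glue_isTree (fun c => (td c).tree)
  set bag' : Option (Σ c : Comp, F c) → Set V :=
    fun x => x.elim S (fun p => Subtype.val '' (td p.1).bag p.2) with hbag'
  have compOf : ∀ v : V, v ∉ S → ∃ c : Comp, v ∈ c.1 :=
    fun v hv => ⟨⟨comp G S v, comp_isCompOf hv⟩, mem_comp_self v⟩
  -- helper segment paths
  have seg : ∀ (c : Comp) (a b : F c) (x : ↥(c.1 ∪ S)), x ∈ (td c).bag a → x ∈ (td c).bag b →
      ∃ q : (glue TT r).Walk (some ⟨c, a⟩) (some ⟨c, b⟩), q.IsPath ∧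
        ∀ s ∈ q.support, ∃ s', s = some ⟨c, s'⟩ ∧ x ∈ (td c).bag s' := by
    intro c a b x hxa hxb
    obtain ⟨w0⟩ := (td c).tree.isConnected.preconnected a b
    refine ⟨(w0.toPath.val).map (homc TT r c),
      Walk.map_isPath_of_injective (homc_inj c) w0.toPath.prop, ?_⟩
    intro s hs
    replace hs : s ∈ ((w0.toPath.val).map (homc TT r c)).support := hs
    rw [Walk.support_map, List.mem_map] at hs
    obtain ⟨s', hs', rfl⟩ := hs
    exact ⟨s', rfl, (td c).bag_connected x a b hxa hxb _ w0.toPath.prop s' hs'⟩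
  have hadj0 : ∀ c : Comp, (glue TT r).Adj none (some ⟨c, r c⟩) :=
    fun c => Or.inl ⟨rfl, c, rfl⟩
  -- key canonical path lemma
  have key : ∀ (v : V) (t₁ t₂ : Option (Σ c : Comp, F c)), v ∈ bag' t₁ → v ∈ bag' t₂ →
      ∃ q : (glue TT r).Walk t₁ t₂, q.IsPath ∧ ∀ s ∈ q.support, v ∈ bag' s := by
    have swap : ∀ {v : V} {t₁ t₂ : Option (Σ c : Comp, F c)},
        (∃ q : (glue TT r).Walk t₁ t₂, q.IsPath ∧ ∀ s ∈ q.support, v ∈ bag' s) →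
        ∃ q : (glue TT r).Walk t₂ t₁, q.IsPath ∧ ∀ s ∈ q.support, v ∈ bag' s := by
      rintro v t₁ t₂ ⟨q, hq, hgood⟩
      exact ⟨q.reverse, hq.reverse,
        fun s hs => hgood s (by rwa [Walk.support_reverse, List.mem_reverse] at hs)⟩
    have caseNS : ∀ (v : V) (c : Comp) (b : F c), v ∈ S → v ∈ bag' (some ⟨c, b⟩) →
        ∃ q : (glue TT r).Walk none (some ⟨c, b⟩), q.IsPath ∧ ∀ s ∈ q.support, v ∈ bag' s := by
      intro v c b hvS h2
      obtain ⟨x, hxb, hxv⟩ := h2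
      have hxS : (x : V) ∈ S := hxv ▸ hvS
      obtain ⟨q₀, hq₀, hgood₀⟩ := seg c (r c) b x (hr c x hxS) hxb
      refine ⟨Walk.cons (hadj0 c) q₀, ?_, ?_⟩
      · rw [Walk.cons_isPath_iff]
        refine ⟨hq₀, fun hmem => ?_⟩
        obtain ⟨s', hs', -⟩ := hgood₀ none hmem
        exact nomatch hs'
      · intro s hs
        rw [Walk.support_cons] at hs
        rcases List.mem_cons.mp hs with rfl | hs
        · exact hvS
        · obtain ⟨s', rfl, hbag⟩ := hgood₀ s hs
          exact ⟨x, hbag, hxv⟩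
    intro v t₁ t₂ h1 h2
    match t₁, t₂ with
    | none, none =>
      exact ⟨Walk.nil, Walk.IsPath.nil, by
        intro s hs
        rw [Walk.support_nil, List.mem_singleton] at hs
        subst hs; exact h1⟩
    | none, some ⟨c, b⟩ => exact caseNS v c b h1 h2
    | some ⟨c, a⟩, none => exact swap (caseNS v c a h2 h1)
    | some ⟨c₁, a⟩, some ⟨c₂, b⟩ =>
      by_cases hc : c₁ = c₂
      · subst hc
        obtain ⟨x, hxa, hxv⟩ := h1
        obtain ⟨y, hyb, hyv⟩ := h2
        have hxy : y = x := Subtype.ext (hyv.trans hxv.symm)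
        subst hxy
        obtain ⟨q₀, hq₀, hgood₀⟩ := seg c₁ a b y hxa hyb
        refine ⟨q₀, hq₀, fun s hs => ?_⟩
        obtain ⟨s', rfl, hbag⟩ := hgood₀ s hs
        exact ⟨y, hbag, hxv⟩
      · -- v must be in S
        obtain ⟨x, hxa, hxv⟩ := h1
        obtain ⟨y, hyb, hyv⟩ := h2
        have hvS : v ∈ S := by
          by_contra hvS
          have hx1 : v ∈ c₁.1 := by
            rcases x.2 with h | h
            · exact hxv ▸ h
            · exact absurd (hxv ▸ h) hvS
          have hy1 : v ∈ c₂.1 := by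
            rcases y.2 with h | h
            · exact hyv ▸ h
            · exact absurd (hyv ▸ h) hvS
          exact hc (Subtype.ext (isCompOf_eq c₁.2 c₂.2 hx1 hy1))
        obtain ⟨qa, hqa, hgooda⟩ := seg c₁ a (r c₁) x hxa (hr c₁ x (hxv ▸ hvS))
        obtain ⟨qb, hqb, hgoodb⟩ := seg c₂ (r c₂) b y (hr c₂ y (hyv ▸ hvS)) hyb
        have hadj1 : (glue TT r).Adj (some ⟨c₁, r c₁⟩) none := (hadj0 c₁).symm
        refine ⟨qa.append (Walk.cons hadj1 (Walk.cons (hadj0 c₂) qb)), ?_, ?_⟩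
        · rw [Walk.isPath_def, Walk.support_append, Walk.support_cons, List.tail_cons,
            Walk.support_cons]
          refine List.Nodup.append hqa.support_nodup ?_ ?_
          · rw [List.nodup_cons]
            refine ⟨fun hmem => ?_, hqb.support_nodup⟩
            obtain ⟨s', hs', -⟩ := hgoodb none hmem
            exact nomatch hs'
          · intro z hza hzb
            obtain ⟨s₁, rfl, -⟩ := hgooda z hza
            rcases List.mem_cons.mp hzb with h | h
            · exact nomatch h
            · obtain ⟨s₂, hs₂, -⟩ := hgoodb _ h
              have := Sigma.mk.inj_iff.mp (Option.some.inj hs₂)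
              exact hc this.1
        · intro s hs
          rw [Walk.mem_support_append_iff] at hs
          rcases hs with hs | hs
          · obtain ⟨s', rfl, hbag⟩ := hgooda s hs
            exact ⟨x, hbag, hxv⟩
          · rw [Walk.support_cons] at hs
            rcases List.mem_cons.mp hs with rfl | hs
            · exact ⟨x, hr c₁ x (hxv ▸ hvS), hxv⟩
            · rw [Walk.support_cons] at hs
              rcases List.mem_cons.mp hs with rfl | hs
              · exact hvS
              · obtain ⟨s', rfl, hbag⟩ := hgoodb s hs
                exact ⟨y, hbag, hyv⟩
  refine ⟨⟨Option (Σ c : Comp, F c), glue TT r, htree, bag', ?_, ?_, ?_⟩, ?_⟩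
  · -- cover_vertex
    intro v
    by_cases hv : v ∈ S
    · exact ⟨none, hv⟩
    · obtain ⟨c, hvc⟩ := compOf v hv
      obtain ⟨t, ht⟩ := (td c).cover_vertex ⟨v, Or.inl hvc⟩
      exact ⟨some ⟨c, t⟩, ⟨⟨v, Or.inl hvc⟩, ht, rfl⟩⟩
  · -- cover_edge
    intro u v hadj
    by_cases hu : u ∈ S <;> by_cases hv : v ∈ S
    · obtain ⟨C₁, _, _, hf1, -⟩ := hS
      set c₀ : Comp := ⟨C₁, hf1.1⟩
      have hxy : (⟨u, Or.inr hu⟩ : ↥(c₀.1 ∪ S)) ≠ ⟨v, Or.inr hv⟩ :=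
        fun h => hadj.ne (congrArg Subtype.val h)
      obtain ⟨t, h1, h2⟩ := (td c₀).cover_edge ⟨u, Or.inr hu⟩ ⟨v, Or.inr hv⟩
        (Or.inr ⟨hu, hv, hxy⟩)
      exact ⟨some ⟨c₀, t⟩, ⟨⟨u, Or.inr hu⟩, h1, rfl⟩, ⟨⟨v, Or.inr hv⟩, h2, rfl⟩⟩
    · obtain ⟨c, hvc⟩ := compOf v hv
      obtain ⟨t, h1, h2⟩ := (td c).cover_edge ⟨v, Or.inl hvc⟩ ⟨u, Or.inr hu⟩
        (Or.inl hadj.symm)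
      exact ⟨some ⟨c, t⟩, ⟨⟨u, Or.inr hu⟩, h2, rfl⟩, ⟨⟨v, Or.inl hvc⟩, h1, rfl⟩⟩
    · obtain ⟨c, huc⟩ := compOf u hu
      obtain ⟨t, h1, h2⟩ := (td c).cover_edge ⟨u, Or.inl huc⟩ ⟨v, Or.inr hv⟩
        (Or.inl hadj)
      exact ⟨some ⟨c, t⟩, ⟨⟨u, Or.inl huc⟩, h1, rfl⟩, ⟨⟨v, Or.inr hv⟩, h2, rfl⟩⟩
    · obtain ⟨c, huc⟩ := compOf u hu
      have hvc : v ∈ c.1 := c.2.2.2.2 u huc v hadj hv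
      obtain ⟨t, h1, h2⟩ := (td c).cover_edge ⟨u, Or.inl huc⟩ ⟨v, Or.inl hvc⟩
        (Or.inl hadj)
      exact ⟨some ⟨c, t⟩, ⟨⟨u, Or.inl huc⟩, h1, rfl⟩, ⟨⟨v, Or.inl hvc⟩, h2, rfl⟩⟩
  · -- bag_connected
    intro v t₁ t₂ h1 h2 p hp t ht
    obtain ⟨q, hq, hgood⟩ := key v t₁ t₂ h1 h2
    obtain ⟨q₀, -, huniq⟩ := htree.existsUnique_path t₁ t₂
    have hpq : p = q := (huniq p hp).trans (huniq q hq).symm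
    exact hgood t (hpq ▸ ht)
  · -- width
    rintro (_ | ⟨c, t⟩)
    · exact hSsize
    · show (Subtype.val '' (td c).bag t).ncard ≤ w + 1
      rw [Set.ncard_image_of_injective _ Subtype.val_injective]
      exact hw c t
end
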